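/- arXiv:2507.12779 — 12 statements merged into one kernel-verified Lean document; each statement's English description precedes it below -/
import Mathlib

section
/- The function G(v) := φ(v)·F(v) + ∫_v^{v̄} φ(s)·f(s) ds is strictly increasing on V, and it satisfies G(v̲) = v̲ and G(v̄) = v̄. -/
open Set MeasureTheory

/-- The virtual value function `φ(v) = v - (1 - F v) / f v`. -/
noncomputable def phi (F f : ℝ → ℝ) (v : ℝ) : ℝ := v - (1 - F v) / f v

/-- The function `G(v) = φ(v)·F(v) + ∫_v^{v̄} φ(s)·f(s) ds`. -/
noncomputable def Gfun (F f : ℝ → ℝ) (vhi : ℝ) (v : ℝ) : ℝ :=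
  phi F f v * F v + ∫ s in v..vhi, phi F f s * f s

/-- `G` is strictly increasing on `V = [v̲, v̄]`, with
`G(v̲) = v̲` and `G(v̄) = v̄`. -/
theorem stmt_0
    (vlo vhi : ℝ) (hvlo : 0 ≤ vlo) (hlt : vlo < vhi)
    (F f : ℝ → ℝ) (hFmono : Monotone F)
    (hFlo : F vlo = 0) (hFhi : F vhi = 1)
    (hFderiv : ∀ v ∈ Set.Icc vlo vhi, HasDerivAt F (f v) v)
    (hfpos : ∀ v ∈ Set.Icc vlo vhi, 0 < f v)
    (hfdiff : DifferentiableOn ℝ f (Set.Icc vlo vhi))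
    (hreg : StrictMonoOn (phi F f) (Set.Icc vlo vhi)) :
    StrictMonoOn (Gfun F f vhi) (Set.Icc vlo vhi) ∧
      Gfun F f vhi vlo = vlo ∧ Gfun F f vhi vhi = vhi := by
  have hFcont : ContinuousOn F (Set.Icc vlo vhi) := fun x hx =>
    (hFderiv x hx).continuousAt.continuousWithinAt
  have hfcont : ContinuousOn f (Set.Icc vlo vhi) := hfdiff.continuousOn
  have hfne : ∀ x ∈ Set.Icc vlo vhi, f x ≠ 0 := fun x hx => (hfpos x hx).ne'
  have hphicont : ContinuousOn (phi F f) (Set.Icc vlo vhi) := by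
    apply (continuousOn_id).sub
    exact (continuousOn_const.sub hFcont).div hfcont hfne
  have hgcont : ContinuousOn (fun s => phi F f s * f s) (Set.Icc vlo vhi) :=
    hphicont.mul hfcont
  -- FTC for the integrand
  have key : ∀ a ∈ Set.Icc vlo vhi, ∀ b ∈ Set.Icc vlo vhi, a ≤ b →
      (∫ s in a..b, phi F f s * f s) = b * (F b - 1) - a * (F a - 1) := by
    intro a ha b hb hab
    have hsub : Set.uIcc a b ⊆ Set.Icc vlo vhi := by
      rw [Set.uIcc_of_le hab]; exact Set.Icc_subset_Icc ha.1 hb.2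
    apply intervalIntegral.integral_eq_sub_of_hasDerivAt
    · intro x hx
      have hx' := hsub hx
      have h1 : HasDerivAt (fun s => s * (F s - 1)) (1 * (F x - 1) + x * f x) x :=
        (hasDerivAt_id x).mul ((hFderiv x hx').sub_const 1)
      convert h1 using 1; rfl; rfl
      have := hfne x hx'
      simp only [phi]
      field_simp
      ring
    · exact ((hgcont.mono hsub).mono (by rw [Set.uIcc_of_le hab])).intervalIntegrable_of_Icc hab
  have keyf : ∀ a ∈ Set.Icc vlo vhi, ∀ b ∈ Set.Icc vlo vhi, a ≤ b →
      (∫ s in a..b, f s) = F b - F a := by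
    intro a ha b hb hab
    have hsub : Set.uIcc a b ⊆ Set.Icc vlo vhi := by
      rw [Set.uIcc_of_le hab]; exact Set.Icc_subset_Icc ha.1 hb.2
    apply intervalIntegral.integral_eq_sub_of_hasDerivAt
    · exact fun x hx => hFderiv x (hsub hx)
    · exact ((hfcont.mono hsub).mono (by rw [Set.uIcc_of_le hab])).intervalIntegrable_of_Icc hab
  refine ⟨?_, ?_, ?_⟩
  · intro w hw v hv hwv
    have hsub : Set.Icc w v ⊆ Set.Icc vlo vhi := Set.Icc_subset_Icc hw.1 hv.2
    have hsplit : (∫ s in w..v, phi F f s * f s) + (∫ s in v..vhi, phi F f s * f s)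
        = ∫ s in w..vhi, phi F f s * f s := by
      apply intervalIntegral.integral_add_adjacent_intervals
      · exact (hgcont.mono hsub).intervalIntegrable_of_Icc hwv.le
      · exact (hgcont.mono (Set.Icc_subset_Icc hv.1 le_rfl)).intervalIntegrable_of_Icc hv.2
    have hint : (∫ s in w..v, phi F f s * f s) < ∫ s in w..v, phi F f v * f s := by
      apply intervalIntegral.integral_lt_integral_of_continuousOn_of_le_of_exists_lt hwv
        (hgcont.mono hsub) (continuousOn_const.mul (hfcont.mono hsub))
      · intro x hx
        have hx' : x ∈ Set.Icc vlo vhi := hsub ⟨hx.1.le, hx.2⟩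
        have : phi F f x ≤ phi F f v := by
          rcases eq_or_lt_of_le hx.2 with h | h
          · rw [h]
          · exact (hreg hx' hv h).le
        exact mul_le_mul_of_nonneg_right this (hfpos x hx').le
      · refine ⟨w, Set.left_mem_Icc.2 hwv.le, ?_⟩
        exact mul_lt_mul_of_pos_right (hreg hw hv hwv) (hfpos w hw)
    have hconst : (∫ s in w..v, phi F f v * f s) = phi F f v * (F v - F w) := by
      rw [intervalIntegral.integral_const_mul, keyf w hw v hv hwv.le]
    have hFw : 0 ≤ F w := hFlo ▸ hFmono hw.1
    have hphi : phi F f w < phi F f v := hreg hw hv hwv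
    simp only [Gfun]
    rw [← hsplit]
    have : phi F f w * F w + (∫ s in w..v, phi F f s * f s) < phi F f v * F v := by
      calc phi F f w * F w + (∫ s in w..v, phi F f s * f s)
          < phi F f w * F w + phi F f v * (F v - F w) := by
            rw [← hconst]; linarith
        _ ≤ phi F f v * F v := by nlinarith
    linarith
  · have h := key vlo ⟨le_rfl, hlt.le⟩ vhi ⟨hlt.le, le_rfl⟩ hlt.le
    simp only [Gfun, hFlo, hFhi, mul_zero, zero_add, h]
    ring
  · simp only [Gfun, intervalIntegral.integral_same, add_zero, hFhi, phi, mul_one]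
    ring
end

section
/- The producer surplus P(k) := ϑ(k)·(1 − k/F(ϑ(k)))·(1 − F(ϑ(k))) is differentiable at almost every k ∈ (0,1), with derivative P'(k) = −(1/F(ϑ(k)))·∫_{ϑ(k)}^{v̄} φ(s)·f(s) ds, which is strictly negative. -/
open Set MeasureTheory

lemma key_alg (v x ff φ G Kv Kd : ℝ) (hx : x ≠ 0)
    (hφ : φ * ff = v * ff - (1 - x))
    (hGv : G = φ * x + v * (1 - x))
    (hKv : Kv * G = φ * x ^ 2) :
    (1 * (1 - Kv / x) + v * (0 - (Kd * x - Kv * ff) / x ^ 2)) * (1 - x)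
        + v * (1 - Kv / x) * (0 - ff)
      = -(1 / x) * (v * (1 - x)) * Kd := by
  rw [← sub_eq_zero]
  have main : x^2*(1-x) - v*ff*x^2 + Kv*(v*ff - x + x^2) = 0 := by
    linear_combination (x^2 - Kv*x) * hφ + ff * hKv - Kv*ff*hGv
  have expand : (1 * (1 - Kv / x) + v * (0 - (Kd * x - Kv * ff) / x ^ 2)) * (1 - x)
      + v * (1 - Kv / x) * (0 - ff) - (-(1 / x) * (v * (1 - x)) * Kd)
      = (x^2*(1-x) - v*ff*x^2 + Kv*(v*ff - x + x^2))/x^2 := by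
    field_simp
    ring
  rw [expand, main, zero_div]

/-- the producer surplus `P(k) = ϑ(k)·(1 − k/F(ϑ(k)))·(1 − F(ϑ(k)))` is
differentiable at almost every `k ∈ (0,1)`, with derivative
`P'(k) = −(1/F(ϑ(k)))·∫_{ϑ(k)}^{v̄} φ(s)·f(s) ds`, which is strictly negative. -/
theorem stmt_8
    (vlo vhi : ℝ) (hvlo : 0 ≤ vlo) (hlt : vlo < vhi)
    (F f : ℝ → ℝ) (hFmono : Monotone F)
    (hFlo : F vlo = 0) (hFhi : F vhi = 1)
    (hFderiv : ∀ v ∈ Set.Icc vlo vhi, HasDerivAt F (f v) v)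
    (hfpos : ∀ v ∈ Set.Icc vlo vhi, 0 < f v)
    (hfdiff : DifferentiableOn ℝ f (Set.Icc vlo vhi))
    (hreg : StrictMonoOn (phi F f) (Set.Icc vlo vhi))
    (vM : ℝ) (hvM : IsLeast {v ∈ Set.Icc vlo vhi | 0 ≤ phi F f v} vM)
    (FInv : ℝ → ℝ)
    (hFInv : ∀ k ∈ Set.Ioo (0:ℝ) 1, FInv k ∈ Set.Icc vlo vhi ∧ F (FInv k) = k)
    (θ : ℝ → ℝ)
    (hθ : ∀ k ∈ Set.Ioo (0:ℝ) 1, θ k ∈ Set.Icc vlo vhi ∧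
      k * Gfun F f vhi (θ k) = phi F f (θ k) * (F (θ k)) ^ 2)
    (hθuniq : ∀ k ∈ Set.Ioo (0:ℝ) 1, ∀ v ∈ Set.Icc vlo vhi,
      k * Gfun F f vhi v = phi F f v * (F v) ^ 2 → v = θ k)
    (hθloc : ∀ k ∈ Set.Ioo (0:ℝ) 1, θ k ∈ Set.Ioo (max vM (FInv k)) vhi)
    :
    ∀ᵐ k ∂(MeasureTheory.volume.restrict (Set.Ioo (0:ℝ) 1)),
      HasDerivAt (fun k' => θ k' * (1 - k' / F (θ k')) * (1 - F (θ k')))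
          (-(1 / F (θ k)) * ∫ s in θ k..vhi, phi F f s * f s) k ∧
        -(1 / F (θ k)) * ∫ s in θ k..vhi, phi F f s * f s < 0 := by
  have hfne : ∀ v ∈ Set.Icc vlo vhi, f v ≠ 0 := fun v hv => (hfpos v hv).ne'
  have hFc : ContinuousOn F (Set.Icc vlo vhi) :=
    fun v hv => ((hFderiv v hv).continuousAt).continuousWithinAt
  have hfc : ContinuousOn f (Set.Icc vlo vhi) := hfdiff.continuousOn
  have hphic : ContinuousOn (phi F f) (Set.Icc vlo vhi) := by
    unfold phi
    exact continuousOn_id.sub ((continuousOn_const.sub hFc).div hfc hfne)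
  -- the integral identity ∫_v^vhi φ f = v (1 - F v)
  have hint : ∀ v ∈ Set.Icc vlo vhi,
      (∫ s in v..vhi, phi F f s * f s) = v * (1 - F v) := by
    intro v hv
    have huIcc : Set.uIcc v vhi ⊆ Set.Icc vlo vhi := by
      rw [Set.uIcc_of_le hv.2]
      exact Set.Icc_subset_Icc hv.1 le_rfl
    have hH : ∀ s ∈ Set.uIcc v vhi,
        HasDerivAt (fun w => w * (1 - F w)) (-(phi F f s * f s)) s := by
      intro s hs
      have hsI := huIcc hs
      have h1 : HasDerivAt (fun w => w * (1 - F w))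
          (1 * (1 - F s) + s * (0 - f s)) s :=
        (hasDerivAt_id s).mul ((hasDerivAt_const s (1:ℝ)).sub (hFderiv s hsI))
      convert h1 using 1
      unfold phi
      field_simp [hfne s hsI]
      ring
    have hInt : IntervalIntegrable (fun s => -(phi F f s * f s)) volume v vhi := by
      apply ContinuousOn.intervalIntegrable
      exact ((hphic.mono huIcc).mul (hfc.mono huIcc)).neg
    have := intervalIntegral.integral_eq_sub_of_hasDerivAt hH hInt
    have h2 : (∫ s in v..vhi, -(phi F f s * f s))
        = -(∫ s in v..vhi, phi F f s * f s) := intervalIntegral.integral_neg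
    rw [h2] at this
    rw [hFhi] at this
    linarith [this]
  -- strict monotonicity of F
  have hFsm : StrictMonoOn F (Set.Icc vlo vhi) := by
    apply strictMonoOn_of_deriv_pos (convex_Icc _ _) hFc
    intro v hv
    rw [interior_Icc] at hv
    have hvI : v ∈ Set.Icc vlo vhi := Set.Ioo_subset_Icc_self hv
    rw [(hFderiv v hvI).deriv]
    exact hfpos v hvI
  have hvMS : vM ∈ Set.Icc vlo vhi := hvM.1.1
  -- properties on J = Ioo vM vhi
  have hJS : ∀ v ∈ Set.Ioo vM vhi, v ∈ Set.Icc vlo vhi := by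
    intro v hv
    exact ⟨le_of_lt (lt_of_le_of_lt hvMS.1 hv.1), le_of_lt hv.2⟩
  have hvpos : ∀ v ∈ Set.Ioo vM vhi, 0 < v := by
    intro v hv
    exact lt_of_le_of_lt (hvlo.trans hvMS.1) hv.1
  have hxpos : ∀ v ∈ Set.Ioo vM vhi, 0 < F v := by
    intro v hv
    have := hFsm hvMS (hJS v hv) hv.1
    have h0 : 0 ≤ F vM := hFlo ▸ hFmono hvMS.1
    linarith
  have hxlt : ∀ v ∈ Set.Ioo vM vhi, F v < 1 := by
    intro v hv
    have := hFsm (hJS v hv) (Set.right_mem_Icc.2 (le_of_lt hlt)) hv.2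
    linarith [hFhi ▸ this]
  have hphipos : ∀ v ∈ Set.Ioo vM vhi, 0 < phi F f v := by
    intro v hv
    exact lt_of_le_of_lt hvM.1.2 (hreg hvMS (hJS v hv) hv.1)
  have hGval : ∀ v ∈ Set.Ioo vM vhi,
      Gfun F f vhi v = phi F f v * F v + v * (1 - F v) := by
    intro v hv
    unfold Gfun
    rw [hint v (hJS v hv)]
  have hGpos : ∀ v ∈ Set.Ioo vM vhi, 0 < Gfun F f vhi v := by
    intro v hv
    rw [hGval v hv]
    have h1 := hphipos v hv
    have h2 := hxpos v hv
    have h3 := hxlt v hv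
    have h4 := hvpos v hv
    nlinarith
  set K : ℝ → ℝ := fun v => phi F f v * (F v) ^ 2 / Gfun F f vhi v with hKdef
  have hθJ : ∀ k ∈ Set.Ioo (0:ℝ) 1, θ k ∈ Set.Ioo vM vhi := by
    intro k hk
    obtain ⟨h1, h2⟩ := hθloc k hk
    exact ⟨lt_of_le_of_lt (le_max_left _ _) h1, h2⟩
  have hKθ : ∀ k ∈ Set.Ioo (0:ℝ) 1, K (θ k) = k := by
    intro k hk
    have hG := hGpos _ (hθJ k hk)
    rw [hKdef]
    simp only
    rw [div_eq_iff hG.ne']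
    linarith [(hθ k hk).2]
  have hKJ : ∀ v ∈ Set.Ioo vM vhi, K v ∈ Set.Ioo (0:ℝ) 1 := by
    intro v hv
    have hG := hGpos v hv
    have hφ := hphipos v hv
    have hx := hxpos v hv
    have hx1 := hxlt v hv
    have hvp := hvpos v hv
    constructor
    · exact div_pos (mul_pos hφ (pow_pos hx 2)) hG
    · rw [div_lt_one hG, hGval v hv]
      nlinarith [mul_pos (mul_pos hφ hx) (sub_pos.2 hx1), mul_pos hvp (sub_pos.2 hx1)]
  have hθK : ∀ v ∈ Set.Ioo vM vhi, θ (K v) = v := by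
    intro v hv
    refine (hθuniq (K v) (hKJ v hv) v (hJS v hv) ?_).symm
    rw [hKdef]
    simp only
    rw [div_mul_cancel₀ _ (hGpos v hv).ne']
  have hJIoo : ∀ v ∈ Set.Ioo vM vhi, v ∈ Set.Ioo vlo vhi := by
    intro v hv
    exact ⟨lt_of_le_of_lt hvMS.1 hv.1, hv.2⟩
  -- differentiability of phi at interior points
  have hphid : ∀ v ∈ Set.Ioo vlo vhi, HasDerivAt (phi F f) (deriv (phi F f) v) v := by
    intro v hv
    have hmemN : Set.Icc vlo vhi ∈ nhds v := Icc_mem_nhds hv.1 hv.2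
    have hvI : v ∈ Set.Icc vlo vhi := Set.Ioo_subset_Icc_self hv
    have hfd : DifferentiableAt ℝ f v := (hfdiff v hvI).differentiableAt hmemN
    have : DifferentiableAt ℝ (phi F f) v := by
      unfold phi
      exact differentiableAt_fun_id.sub
        (((differentiableAt_const (1:ℝ)).sub (hFderiv v hvI).differentiableAt).div hfd (hfne v hvI))
    exact this.hasDerivAt
  -- nonnegativity of the derivative of phi
  have hpnn : ∀ v ∈ Set.Ioo vlo vhi, 0 ≤ deriv (phi F f) v := by
    intro v hv
    have hvI : v ∈ Set.Icc vlo vhi := Set.Ioo_subset_Icc_self hv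
    have hs := hasDerivAt_iff_tendsto_slope.1 (hphid v hv)
    have hmono : nhdsWithin v (Set.Ioi v) ≤ nhdsWithin v {v}ᶜ :=
      nhdsWithin_mono v (fun w hw => ne_of_gt hw)
    refine ge_of_tendsto (hs.mono_left hmono) ?_
    filter_upwards [Ioo_mem_nhdsGT_of_mem ⟨le_refl v, hv.2⟩] with w hw
    rw [slope_def_field]
    apply div_nonneg
    · have hwI : w ∈ Set.Icc vlo vhi := ⟨(hv.1.trans hw.1).le, le_of_lt hw.2⟩
      have := hreg hvI hwI hw.1
      linarith
    · linarith [hw.1]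
  -- derivative of Gfun
  have hGd : ∀ v ∈ Set.Ioo vM vhi,
      HasDerivAt (Gfun F f vhi) (deriv (phi F f) v * F v) v := by
    intro v hv
    have hvIoo := hJIoo v hv
    have hvI : v ∈ Set.Icc vlo vhi := Set.Ioo_subset_Icc_self hvIoo
    have hF' := hFderiv v hvI
    have hp := hphid v hvIoo
    have h1 : HasDerivAt (fun w => phi F f w * F w + w * (1 - F w))
        (deriv (phi F f) v * F v + phi F f v * f v
          + (1 * (1 - F v) + v * (0 - f v))) v :=
      (hp.mul hF').add ((hasDerivAt_id v).mul ((hasDerivAt_const v (1:ℝ)).sub hF'))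
    have h2 : HasDerivAt (fun w => phi F f w * F w + w * (1 - F w))
        (deriv (phi F f) v * F v) v := by
      convert h1 using 1
      unfold phi
      field_simp [hfne v hvI]
      ring
    apply h2.congr_of_eventuallyEq
    filter_upwards [Icc_mem_nhds hvIoo.1 hvIoo.2] with w hw
    unfold Gfun
    rw [hint w hw]
  -- derivative of K
  set Kd : ℝ → ℝ := fun v =>
    (deriv (phi F f) v * F v ^ 2 * (v * (1 - F v))
      + 2 * phi F f v * F v * f v * Gfun F f vhi v) / (Gfun F f vhi v) ^ 2 with hKddef
  have hKd : ∀ v ∈ Set.Ioo vM vhi, HasDerivAt K (Kd v) v := by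
    intro v hv
    have hvIoo := hJIoo v hv
    have hvI : v ∈ Set.Icc vlo vhi := Set.Ioo_subset_Icc_self hvIoo
    have hF' := hFderiv v hvI
    have hp := hphid v hvIoo
    have h := (hp.mul (hF'.pow 2)).div (hGd v hv) (hGpos v hv).ne'
    rw [hKdef, hKddef]
    simp only
    refine h.congr_deriv ?_
    have hGv := hGval v hv
    rw [hGv]
    push_cast
    simp only [Pi.mul_apply, Pi.pow_apply]
    ring
  have hKdpos : ∀ v ∈ Set.Ioo vM vhi, 0 < Kd v := by
    intro v hv
    rw [hKddef]
    simp only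
    apply div_pos ?_ (pow_pos (hGpos v hv) 2)
    have t1 : 0 ≤ deriv (phi F f) v * F v ^ 2 * (v * (1 - F v)) := by
      apply mul_nonneg (mul_nonneg (hpnn v (hJIoo v hv)) (sq_nonneg _))
      have := hvpos v hv
      have := hxlt v hv
      nlinarith
    have t2 : 0 < 2 * phi F f v * F v * f v * Gfun F f vhi v := by
      have := hphipos v hv
      have := hxpos v hv
      have := hfpos v (hJS v hv)
      have := hGpos v hv
      positivity
    linarith
  have hKmono : MonotoneOn K (Set.Ioo vM vhi) := by
    apply monotoneOn_of_deriv_nonneg (convex_Ioo _ _)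
    · exact fun v hv => (hKd v hv).differentiableAt.continuousAt.continuousWithinAt
    · rw [interior_Ioo]
      exact fun v hv => (hKd v hv).differentiableAt.differentiableWithinAt
    · rw [interior_Ioo]
      intro v hv
      rw [(hKd v hv).deriv]
      exact (hKdpos v hv).le
  rw [ae_restrict_iff' measurableSet_Ioo]
  refine ae_of_all _ (fun k₀ hk₀ => ?_)
  have hv₀J : θ k₀ ∈ Set.Ioo vM vhi := hθJ k₀ hk₀
  have hv₀Ioo : θ k₀ ∈ Set.Ioo vlo vhi := hJIoo _ hv₀J
  have hv₀I : θ k₀ ∈ Set.Icc vlo vhi := Set.Ioo_subset_Icc_self hv₀Ioo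
  have hx₀ : 0 < F (θ k₀) := hxpos _ hv₀J
  have hx₀ne : F (θ k₀) ≠ 0 := hx₀.ne'
  have hG₀ := hGpos _ hv₀J
  have hKd₀pos := hKdpos _ hv₀J
  have hKd₀ne : Kd (θ k₀) ≠ 0 := hKd₀pos.ne'
  -- continuity of θ at k₀
  have hθtend : Filter.Tendsto θ (nhds k₀) (nhds (θ k₀)) := by
    rw [tendsto_order]
    constructor
    · intro a ha
      obtain ⟨a', ha'1, ha'2⟩ := exists_between (max_lt ha hv₀J.1)
      have ha'J : a' ∈ Set.Ioo vM vhi :=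
        ⟨lt_of_le_of_lt (le_max_right _ _) ha'1, ha'2.trans hv₀J.2⟩
      have hKa' := hKJ a' ha'J
      have hle : K a' ≤ k₀ := by
        have := hKmono ha'J hv₀J ha'2.le
        rwa [hKθ k₀ hk₀] at this
      have hne : K a' ≠ k₀ := by
        intro h
        have h2 := hθK a' ha'J
        rw [h] at h2
        exact ne_of_gt ha'2 h2
      have hlt2 : K a' < k₀ := lt_of_le_of_ne hle hne
      filter_upwards [Ioo_mem_nhds hlt2 hk₀.2] with k hk
      have hk01 : k ∈ Set.Ioo (0:ℝ) 1 := ⟨hKa'.1.trans hk.1, hk.2⟩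
      by_contra hcon
      push_neg at hcon
      have hθka' : θ k ≤ a' :=
        hcon.trans (le_of_lt (lt_of_le_of_lt (le_max_left a vM) ha'1))
      have hmk := hKmono (hθJ k hk01) ha'J hθka'
      rw [hKθ k hk01] at hmk
      linarith [hk.1]
    · intro b hb
      obtain ⟨b', hb'1, hb'2⟩ := exists_between (lt_min hb hv₀J.2)
      have hb'J : b' ∈ Set.Ioo vM vhi :=
        ⟨hv₀J.1.trans hb'1, lt_of_lt_of_le hb'2 (min_le_right _ _)⟩
      have hKb' := hKJ b' hb'J
      have hle : k₀ ≤ K b' := by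
        have := hKmono hv₀J hb'J hb'1.le
        rwa [hKθ k₀ hk₀] at this
      have hne : k₀ ≠ K b' := by
        intro h
        have h2 := hθK b' hb'J
        rw [← h] at h2
        exact ne_of_gt hb'1 h2.symm
      have hlt2 : k₀ < K b' := lt_of_le_of_ne hle hne
      filter_upwards [Ioo_mem_nhds hk₀.1 hlt2] with k hk
      have hk01 : k ∈ Set.Ioo (0:ℝ) 1 := ⟨hk.1, hk.2.trans hKb'.2⟩
      by_contra hcon
      push_neg at hcon
      have hb'θk : b' ≤ θ k :=
        le_trans (le_of_lt (lt_of_lt_of_le hb'2 (min_le_left _ _))) hcon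
      have hmk := hKmono hb'J (hθJ k hk01) hb'θk
      rw [hKθ k hk01] at hmk
      linarith [hk.2]
  have hθcont : ContinuousAt θ k₀ := hθtend
  have hθd : HasDerivAt θ (Kd (θ k₀))⁻¹ k₀ := by
    apply HasDerivAt.of_local_left_inverse hθcont (hKd _ hv₀J) hKd₀ne
    filter_upwards [Ioo_mem_nhds hk₀.1 hk₀.2] with k hk
    exact hKθ k hk
  -- derivative of Q at θ k₀
  have hF'₀ := hFderiv (θ k₀) hv₀I
  have hKd₀ := hKd _ hv₀J
  have hQd : HasDerivAt (fun v => v * (1 - K v / F v) * (1 - F v))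
      (-(1 / F (θ k₀)) * (θ k₀ * (1 - F (θ k₀))) * Kd (θ k₀)) (θ k₀) := by
    have hc := ((hasDerivAt_id (θ k₀)).mul ((hasDerivAt_const (θ k₀) (1:ℝ)).sub
        (hKd₀.div hF'₀ hx₀ne))).mul ((hasDerivAt_const (θ k₀) (1:ℝ)).sub hF'₀)
    refine hc.congr_deriv ?_
    apply key_alg (θ k₀) (F (θ k₀)) (f (θ k₀)) (phi F f (θ k₀)) (Gfun F f vhi (θ k₀))
      (K (θ k₀)) (Kd (θ k₀)) hx₀ne
    · unfold phi
      field_simp [hfne _ hv₀I]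
    · exact hGval _ hv₀J
    · rw [hKdef]
      simp only
      rw [div_mul_cancel₀ _ hG₀.ne']
  have hcomp := hQd.comp k₀ hθd
  have hPd : HasDerivAt (fun k' => θ k' * (1 - k' / F (θ k')) * (1 - F (θ k')))
      (-(1 / F (θ k₀)) * (θ k₀ * (1 - F (θ k₀))) * Kd (θ k₀) * (Kd (θ k₀))⁻¹) k₀ := by
    apply hcomp.congr_of_eventuallyEq
    filter_upwards [Ioo_mem_nhds hk₀.1 hk₀.2] with k hk
    simp only [Function.comp]
    rw [hKθ k hk]
  have hIval : (∫ s in θ k₀..vhi, phi F f s * f s) = θ k₀ * (1 - F (θ k₀)) :=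
    hint _ hv₀I
  have hxlt₀ := hxlt _ hv₀J
  have hv₀pos := hvpos _ hv₀J
  constructor
  · have heq : -(1 / F (θ k₀)) * (θ k₀ * (1 - F (θ k₀))) * Kd (θ k₀) * (Kd (θ k₀))⁻¹
        = -(1 / F (θ k₀)) * ∫ s in θ k₀..vhi, phi F f s * f s := by
      rw [hIval, mul_inv_cancel_right₀ hKd₀ne]
    exact heq ▸ hPd
  · rw [hIval]
    have h1 : 0 < θ k₀ * (1 - F (θ k₀)) := mul_pos hv₀pos (by linarith)
    have h2 : 0 < 1 / F (θ k₀) := by positivity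
    nlinarith
end

section
/- The cutoff map k ↦ ϑ(k) is continuous and strictly increasing on (0,1). -/
open Set MeasureTheory

/-- the cutoff map `k ↦ ϑ(k)` is continuous and strictly increasing
on `(0,1)`. -/
theorem stmt_9
    (vlo vhi : ℝ) (hvlo : 0 ≤ vlo) (hlt : vlo < vhi)
    (F f : ℝ → ℝ) (hFmono : Monotone F)
    (hFlo : F vlo = 0) (hFhi : F vhi = 1)
    (hFderiv : ∀ v ∈ Set.Icc vlo vhi, HasDerivAt F (f v) v)
    (hfpos : ∀ v ∈ Set.Icc vlo vhi, 0 < f v)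
    (hfdiff : DifferentiableOn ℝ f (Set.Icc vlo vhi))
    (hreg : StrictMonoOn (phi F f) (Set.Icc vlo vhi))
    (vM : ℝ) (hvM : IsLeast {v ∈ Set.Icc vlo vhi | 0 ≤ phi F f v} vM)
    (FInv : ℝ → ℝ)
    (hFInv : ∀ k ∈ Set.Ioo (0:ℝ) 1, FInv k ∈ Set.Icc vlo vhi ∧ F (FInv k) = k)
    (θ : ℝ → ℝ)
    (hθ : ∀ k ∈ Set.Ioo (0:ℝ) 1, θ k ∈ Set.Icc vlo vhi ∧
      k * Gfun F f vhi (θ k) = phi F f (θ k) * (F (θ k)) ^ 2)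
    (hθuniq : ∀ k ∈ Set.Ioo (0:ℝ) 1, ∀ v ∈ Set.Icc vlo vhi,
      k * Gfun F f vhi v = phi F f v * (F v) ^ 2 → v = θ k)
    (hθloc : ∀ k ∈ Set.Ioo (0:ℝ) 1, θ k ∈ Set.Ioo (max vM (FInv k)) vhi)
    :
    ContinuousOn θ (Set.Ioo (0:ℝ) 1) ∧ StrictMonoOn θ (Set.Ioo (0:ℝ) 1) := by
  have hFcont : ContinuousOn F (Set.Icc vlo vhi) := fun v hv =>
    ((hFderiv v hv).continuousAt).continuousWithinAt
  have hfcont : ContinuousOn f (Set.Icc vlo vhi) := hfdiff.continuousOn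
  have hfne : ∀ v ∈ Set.Icc vlo vhi, f v ≠ 0 := fun v hv => (hfpos v hv).ne'
  have hphicont : ContinuousOn (phi F f) (Set.Icc vlo vhi) := by
    unfold phi
    exact continuousOn_id.sub ((continuousOn_const.sub hFcont).div hfcont hfne)
  have hintcont : ContinuousOn (fun s => phi F f s * f s) (Set.Icc vlo vhi) :=
    hphicont.mul hfcont
  have hinteg : ∀ a ∈ Set.Icc vlo vhi, ∀ b ∈ Set.Icc vlo vhi,
      IntervalIntegrable (fun s => phi F f s * f s) volume a b := fun a ha b hb =>
    (hintcont.mono (uIcc_subset_Icc ha hb)).intervalIntegrable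
  have hvhimem : vhi ∈ Set.Icc vlo vhi := right_mem_Icc.2 hlt.le
  have hvMmem : vM ∈ Set.Icc vlo vhi := hvM.1.1
  have hphipos : ∀ v ∈ Set.Icc vlo vhi, vM < v → 0 < phi F f v := fun v hv h =>
    lt_of_le_of_lt hvM.1.2 (hreg hvMmem hv h)
  -- positivity of the tail integral
  have hIpos : ∀ v ∈ Set.Icc vlo vhi, vM < v → v < vhi →
      0 < ∫ s in v..vhi, phi F f s * f s := by
    intro v hv hvM' hvhi'
    refine intervalIntegral.intervalIntegral_pos_of_pos_on (hinteg v hv vhi hvhimem) ?_ hvhi'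
    intro s hs
    have hsmem : s ∈ Set.Icc vlo vhi := ⟨hv.1.trans hs.1.le, hs.2.le⟩
    exact mul_pos (hphipos s hsmem (hvM'.trans hs.1)) (hfpos s hsmem)
  -- key pointwise facts
  have key : ∀ v ∈ Set.Icc vlo vhi, vM < v → v < vhi → 0 < F v →
      0 < phi F f v ∧ 0 < Gfun F f vhi v ∧ 0 < phi F f v * F v ^ 2 ∧
        phi F f v * F v ^ 2 < Gfun F f vhi v := by
    intro v hv h1 h2 h3
    have hφ : 0 < phi F f v := hphipos v hv h1
    have hI : 0 < ∫ s in v..vhi, phi F f s * f s := hIpos v hv h1 h2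
    have hF1 : F v ≤ 1 := hFhi ▸ hFmono hv.2
    have hG : 0 < Gfun F f vhi v := by
      unfold Gfun
      have := mul_pos hφ h3
      linarith
    refine ⟨hφ, hG, by positivity, ?_⟩
    unfold Gfun
    nlinarith [mul_pos hφ h3]
  -- every suitable point is in the image of θ
  have mem_image : ∀ v ∈ Set.Icc vlo vhi, vM < v → v < vhi → 0 < F v →
      ∃ k ∈ Set.Ioo (0:ℝ) 1, θ k = v := by
    intro v hv h1 h2 h3
    obtain ⟨hφ, hG, hnum, hltG⟩ := key v hv h1 h2 h3
    refine ⟨phi F f v * F v ^ 2 / Gfun F f vhi v,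
      ⟨div_pos hnum hG, (div_lt_one hG).2 hltG⟩, ?_⟩
    exact (hθuniq _ ⟨div_pos hnum hG, (div_lt_one hG).2 hltG⟩ v hv
      (div_mul_cancel₀ _ hG.ne')).symm
  -- facts about θ k
  have hθfacts : ∀ k ∈ Set.Ioo (0:ℝ) 1, θ k ∈ Set.Icc vlo vhi ∧ vM < θ k ∧
      θ k < vhi ∧ 0 < F (θ k) := by
    intro k hk
    obtain ⟨hmem, _⟩ := hθ k hk
    obtain ⟨hloc1, hloc2⟩ := hθloc k hk
    have h1 : vM < θ k := (le_max_left _ _).trans_lt hloc1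
    have h2 : FInv k < θ k := (le_max_right _ _).trans_lt hloc1
    have hFpos : 0 < F (θ k) :=
      lt_of_lt_of_le (by rw [(hFInv k hk).2]; exact hk.1) (hFmono h2.le)
    exact ⟨hmem, h1, hloc2, hFpos⟩
  -- strict monotonicity
  have hmono : StrictMonoOn θ (Set.Ioo (0:ℝ) 1) := by
    intro k1 hk1 k2 hk2 hk
    by_contra hle
    push_neg at hle
    obtain ⟨hmem1, hfoc1⟩ := hθ k1 hk1
    obtain ⟨hmem2, hfoc2⟩ := hθ k2 hk2
    obtain ⟨_, hM1, hhi1, hF1⟩ := hθfacts k1 hk1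
    obtain ⟨_, hM2, hhi2, hF2⟩ := hθfacts k2 hk2
    obtain ⟨hφ1, hG1, _, _⟩ := key _ hmem1 hM1 hhi1 hF1
    obtain ⟨hφ2, hG2, _, _⟩ := key _ hmem2 hM2 hhi2 hF2
    rcases eq_or_lt_of_le hle with heq | hlt2
    · -- θ k2 = θ k1 forces k1 = k2
      rw [heq] at hfoc2
      have : k1 = k2 := by
        have := hfoc1.trans hfoc2.symm
        exact mul_right_cancel₀ hG1.ne' this
      exact absurd this hk.ne
    · -- θ k2 < θ k1 : cross inequality gives k2 < k1, contradiction
      set v1 := θ k1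
      set v2 := θ k2
      have hφlt : phi F f v2 < phi F f v1 := hreg hmem2 hmem1 hlt2
      have hFle : F v2 ≤ F v1 := hFmono hlt2.le
      have hI1pos : 0 < ∫ s in v1..vhi, phi F f s * f s := hIpos v1 hmem1 hM1 hhi1
      have hIle : (∫ s in v1..vhi, phi F f s * f s) ≤
          ∫ s in v2..vhi, phi F f s * f s := by
        have hadd : (∫ s in v2..v1, phi F f s * f s) +
            (∫ s in v1..vhi, phi F f s * f s) = ∫ s in v2..vhi, phi F f s * f s :=
          intervalIntegral.integral_add_adjacent_intervals
            (hinteg v2 hmem2 v1 hmem1) (hinteg v1 hmem1 vhi hvhimem)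
        have hnn : 0 ≤ ∫ s in v2..v1, phi F f s * f s := by
          refine intervalIntegral.integral_nonneg hlt2.le ?_
          intro u hu
          have humem : u ∈ Set.Icc vlo vhi := ⟨hmem2.1.trans hu.1, hu.2.trans hmem1.2⟩
          have : vM < u := lt_of_lt_of_le hM2 hu.1
          exact (mul_pos (hphipos u humem this) (hfpos u humem)).le
        linarith
      have hcross : phi F f v2 * F v2 ^ 2 * Gfun F f vhi v1 <
          phi F f v1 * F v1 ^ 2 * Gfun F f vhi v2 := by
        unfold Gfun
        have hF2pos : 0 < F v2 := hF2
        have hF1pos : 0 < F v1 := hF2.trans_le hFle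
        have hA : phi F f v2 * F v2 ^ 2 * (phi F f v1 * F v1) ≤
            phi F f v1 * F v1 ^ 2 * (phi F f v2 * F v2) := by
          nlinarith [mul_nonneg (mul_pos (mul_pos hφ1 hφ2)
            (mul_pos hF1pos hF2pos)).le (sub_nonneg.2 hFle)]
        have hB : phi F f v2 * F v2 ^ 2 * (∫ s in v1..vhi, phi F f s * f s) <
            phi F f v1 * F v1 ^ 2 * (∫ s in v2..vhi, phi F f s * f s) := by
          nlinarith [mul_pos (mul_pos (sub_pos.2 hφlt) (pow_pos hF2pos 2)) hI1pos,
            mul_nonneg (mul_nonneg hφ1.le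
              (sub_nonneg.2 (pow_le_pow_left₀ hF2pos.le hFle 2))) hI1pos.le,
            mul_nonneg (mul_nonneg hφ1.le (sq_nonneg (F v1))) (sub_nonneg.2 hIle)]
        nlinarith [hA, hB]
      rw [← hfoc1, ← hfoc2] at hcross
      have hP : 0 < Gfun F f vhi v1 * Gfun F f vhi v2 := mul_pos hG1 hG2
      nlinarith
  -- continuity
  have hcont : ∀ k ∈ Set.Ioo (0:ℝ) 1, ContinuousAt θ k := by
    intro k hk
    obtain ⟨hmem, hM, hhi, hFpos⟩ := hθfacts k hk
    refine hmono.continuousAt_of_exists_between (Ioo_mem_nhds hk.1 hk.2) ?_ ?_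
    · -- left side
      intro b hb
      have hmax : max b (max vM (FInv k)) < θ k :=
        max_lt hb ((hθloc k hk).1)
      obtain ⟨v, hv1, hv2⟩ := exists_between hmax
      have hvM' : vM < v := lt_of_le_of_lt ((le_max_left _ _).trans (le_max_right _ _)) hv1
      have hvmem : v ∈ Set.Icc vlo vhi := ⟨hvMmem.1.trans hvM'.le, (hv2.trans hhi).le⟩
      have hFv : 0 < F v := by
        have h2 : FInv k < v :=
          lt_of_le_of_lt ((le_max_right _ _).trans (le_max_right _ _)) hv1
        calc (0:ℝ) < k := hk.1
          _ = F (FInv k) := (hFInv k hk).2.symm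
          _ ≤ F v := hFmono h2.le
      obtain ⟨k', hk', hθk'⟩ := mem_image v hvmem hvM' (hv2.trans hhi) hFv
      refine ⟨k', hk', ?_⟩
      rw [hθk']
      exact ⟨(le_max_left _ _).trans hv1.le, hv2⟩
    · -- right side
      intro b hb
      obtain ⟨v, hv1, hv2⟩ := exists_between (lt_min hb hhi : θ k < min b vhi)
      have hvM' : vM < v := hM.trans hv1
      have hvhi' : v < vhi := hv2.trans_le (min_le_right _ _)
      have hvmem : v ∈ Set.Icc vlo vhi := ⟨hmem.1.trans hv1.le, hvhi'.le⟩
      have hFv : 0 < F v := hFpos.trans_le (hFmono hv1.le)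
      obtain ⟨k', hk', hθk'⟩ := mem_image v hvmem hvM' hvhi' hFv
      refine ⟨k', hk', ?_⟩
      rw [hθk']
      exact ⟨hv1, hv2.le.trans (min_le_left _ _)⟩
  exact ⟨fun k hk => (hcont k hk).continuousWithinAt, hmono⟩
end

section
/- The cutoff map satisfies the boundary limits lim_{k→0⁺} ϑ(k) = vᴹ and lim_{k→1⁻} ϑ(k) = v̄. -/
open Set MeasureTheory

/-- boundary limits of the cutoff map:
`lim_{k→0⁺} ϑ(k) = vᴹ` and `lim_{k→1⁻} ϑ(k) = v̄`. -/
theorem stmt_10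
    (vlo vhi : ℝ) (hvlo : 0 ≤ vlo) (hlt : vlo < vhi)
    (F f : ℝ → ℝ) (hFmono : Monotone F)
    (hFlo : F vlo = 0) (hFhi : F vhi = 1)
    (hFderiv : ∀ v ∈ Set.Icc vlo vhi, HasDerivAt F (f v) v)
    (hfpos : ∀ v ∈ Set.Icc vlo vhi, 0 < f v)
    (hfdiff : DifferentiableOn ℝ f (Set.Icc vlo vhi))
    (hreg : StrictMonoOn (phi F f) (Set.Icc vlo vhi))
    (vM : ℝ) (hvM : IsLeast {v ∈ Set.Icc vlo vhi | 0 ≤ phi F f v} vM)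
    (FInv : ℝ → ℝ)
    (hFInv : ∀ k ∈ Set.Ioo (0:ℝ) 1, FInv k ∈ Set.Icc vlo vhi ∧ F (FInv k) = k)
    (θ : ℝ → ℝ)
    (hθ : ∀ k ∈ Set.Ioo (0:ℝ) 1, θ k ∈ Set.Icc vlo vhi ∧
      k * Gfun F f vhi (θ k) = phi F f (θ k) * (F (θ k)) ^ 2)
    (hθuniq : ∀ k ∈ Set.Ioo (0:ℝ) 1, ∀ v ∈ Set.Icc vlo vhi,
      k * Gfun F f vhi v = phi F f v * (F v) ^ 2 → v = θ k)
    (hθloc : ∀ k ∈ Set.Ioo (0:ℝ) 1, θ k ∈ Set.Ioo (max vM (FInv k)) vhi)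
    :
    Filter.Tendsto θ (nhdsWithin 0 (Set.Ioi (0:ℝ))) (nhds vM) ∧
      Filter.Tendsto θ (nhdsWithin 1 (Set.Iio (1:ℝ))) (nhds vhi) := by
  -- basic facts
  have hvMIcc : vM ∈ Set.Icc vlo vhi := hvM.1.1
  have hvMphi : 0 ≤ phi F f vM := hvM.1.2
  have hhalf : (1/2 : ℝ) ∈ Set.Ioo (0:ℝ) 1 := by norm_num
  have hvMlt : vM < vhi := by
    have h := hθloc (1/2) hhalf
    have h1 : vM < θ (1/2) := lt_of_le_of_lt (le_max_left _ _) h.1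
    linarith [h.2]
  have hFcont : ContinuousOn F (Set.Icc vlo vhi) := fun v hv =>
    (hFderiv v hv).continuousAt.continuousWithinAt
  have hfcont : ContinuousOn f (Set.Icc vlo vhi) := hfdiff.continuousOn
  have hphicont : ContinuousOn (phi F f) (Set.Icc vlo vhi) := by
    apply continuousOn_id.sub
    exact (continuousOn_const.sub hFcont).div hfcont (fun v hv => (hfpos v hv).ne')
  have hFs : StrictMonoOn F (Set.Icc vlo vhi) := by
    apply StrictMonoOn.mono (s := Set.Icc vlo vhi) ?_ le_rfl
    apply strictMonoOn_of_deriv_pos (convex_Icc _ _) hFcont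
    intro x hx
    rw [interior_Icc] at hx
    rw [(hFderiv x (Set.Ioo_subset_Icc_self hx)).deriv]
    exact hfpos x (Set.Ioo_subset_Icc_self hx)
  have hF01 : ∀ v ∈ Set.Icc vlo vhi, F v ∈ Set.Icc (0:ℝ) 1 := by
    intro v hv
    constructor
    · rw [← hFlo]; exact hFmono hv.1
    · rw [← hFhi]; exact hFmono hv.2
  -- bounds
  obtain ⟨A, hA⟩ := isCompact_Icc.exists_bound_of_continuousOn hphicont
  obtain ⟨Cf, hCf⟩ := isCompact_Icc.exists_bound_of_continuousOn hfcont
  have hA0 : 0 ≤ A := le_trans (norm_nonneg _) (hA vlo ⟨le_rfl, hlt.le⟩)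
  have hCf0 : 0 ≤ Cf := le_trans (norm_nonneg _) (hCf vlo ⟨le_rfl, hlt.le⟩)
  set B : ℝ := A + A * Cf * (vhi - vlo) with hBdef
  have hGb : ∀ v ∈ Set.Icc vlo vhi, Gfun F f vhi v ≤ B := by
    intro v hv
    have h1 : |phi F f v * F v| ≤ A * 1 := by
      rw [abs_mul]
      apply mul_le_mul (hA v hv) _ (abs_nonneg _) hA0
      rw [abs_le]
      constructor
      · linarith [(hF01 v hv).1]
      · exact (hF01 v hv).2
    have h2 : ‖∫ s in v..vhi, phi F f s * f s‖ ≤ (A * Cf) * |vhi - v| := by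
      apply intervalIntegral.norm_integral_le_of_norm_le_const
      intro x hx
      have hx' : x ∈ Set.Icc vlo vhi := by
        rw [Set.uIoc_of_le hv.2] at hx
        exact ⟨le_trans hv.1 hx.1.le, hx.2⟩
      rw [norm_mul]
      exact mul_le_mul (hA x hx') (hCf x hx') (norm_nonneg _) hA0
    have h3 : |vhi - v| ≤ vhi - vlo := by
      rw [abs_of_nonneg (by linarith [hv.2])]
      linarith [hv.1]
    have h2' : ‖∫ s in v..vhi, phi F f s * f s‖ ≤ A * Cf * (vhi - vlo) :=
      le_trans h2 (mul_le_mul_of_nonneg_left h3 (mul_nonneg hA0 hCf0))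
    rw [Real.norm_eq_abs] at h2'
    have := abs_le.mp h1
    have := abs_le.mp h2'
    unfold Gfun
    linarith
  set B' : ℝ := max B 1 with hB'def
  have hB'pos : (0:ℝ) < B' := lt_of_lt_of_le one_pos (le_max_right _ _)
  constructor
  · -- limit at 0
    refine tendsto_order.2 ⟨?_, ?_⟩
    · intro a ha
      have hmem : Set.Ioo (0:ℝ) 1 ∈ nhdsWithin 0 (Set.Ioi 0) :=
        Ioo_mem_nhdsGT_of_mem ⟨le_rfl, one_pos⟩
      filter_upwards [hmem] with k hk
      have h := hθloc k hk
      have : vM < θ k := lt_of_le_of_lt (le_max_left _ _) h.1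
      linarith
    · intro a ha
      by_cases hav : vhi ≤ a
      · have hmem : Set.Ioo (0:ℝ) 1 ∈ nhdsWithin 0 (Set.Ioi 0) :=
          Ioo_mem_nhdsGT_of_mem ⟨le_rfl, one_pos⟩
        filter_upwards [hmem] with k hk
        exact lt_of_lt_of_le (hθloc k hk).2 hav
      · push_neg at hav
        have haIcc : a ∈ Set.Icc vlo vhi := ⟨le_trans hvMIcc.1 ha.le, hav.le⟩
        have hφa : 0 < phi F f a := lt_of_le_of_lt hvMphi (hreg hvMIcc haIcc ha)
        have hFa : 0 < F a := by
          rw [← hFlo]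
          exact hFs ⟨le_rfl, hlt.le⟩ haIcc (lt_of_le_of_lt hvMIcc.1 ha)
        set c : ℝ := phi F f a * F a ^ 2 with hcdef
        have hc : 0 < c := mul_pos hφa (pow_pos hFa 2)
        have hmem : Set.Ioo (0:ℝ) (min 1 (c / B')) ∈ nhdsWithin 0 (Set.Ioi 0) :=
          Ioo_mem_nhdsGT_of_mem ⟨le_rfl, lt_min one_pos (div_pos hc hB'pos)⟩
        filter_upwards [hmem] with k hk
        have hk01 : k ∈ Set.Ioo (0:ℝ) 1 := ⟨hk.1, lt_of_lt_of_le hk.2 (min_le_left _ _)⟩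
        by_contra hcon
        push_neg at hcon
        obtain ⟨hθIcc, hFOC⟩ := hθ k hk01
        have hφ : phi F f a ≤ phi F f (θ k) := (hreg.monotoneOn) haIcc hθIcc hcon
        have hFle : F a ≤ F (θ k) := hFmono hcon
        have hle : c ≤ phi F f (θ k) * F (θ k) ^ 2 :=
          mul_le_mul hφ (pow_le_pow_left₀ hFa.le hFle 2) (pow_nonneg hFa.le 2)
            (le_trans hφa.le hφ)
        have hub : k * Gfun F f vhi (θ k) ≤ k * B' :=
          mul_le_mul_of_nonneg_left (le_trans (hGb (θ k) hθIcc) (le_max_left B 1)) hk.1.le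
        have hkc : k * B' < c := by
          have hkc' : k < c / B' := lt_of_lt_of_le hk.2 (min_le_right _ _)
          exact (lt_div_iff₀ hB'pos).1 hkc'
        rw [hFOC] at hub
        linarith
  · -- limit at 1
    refine tendsto_order.2 ⟨?_, ?_⟩
    · intro a ha
      by_cases haM : a < vM
      · have hmem : Set.Ioo (0:ℝ) 1 ∈ nhdsWithin 1 (Set.Iio 1) :=
          Ioo_mem_nhdsLT_of_mem ⟨one_pos, le_rfl⟩
        filter_upwards [hmem] with k hk
        have h := hθloc k hk
        have : vM < θ k := lt_of_le_of_lt (le_max_left _ _) h.1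
        linarith
      · push_neg at haM
        have haIcc : a ∈ Set.Icc vlo vhi := ⟨le_trans hvMIcc.1 haM, ha.le⟩
        have hk0lt : F a < 1 := by rw [← hFhi]; exact hFs haIcc ⟨hlt.le, le_rfl⟩ ha
        have hk00 : 0 ≤ F a := (hF01 a haIcc).1
        have hmem : Set.Ioo (F a) 1 ∈ nhdsWithin 1 (Set.Iio 1) :=
          Ioo_mem_nhdsLT_of_mem ⟨hk0lt, le_rfl⟩
        filter_upwards [hmem] with k hk
        have hk01 : k ∈ Set.Ioo (0:ℝ) 1 := ⟨lt_of_le_of_lt hk00 hk.1, hk.2⟩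
        obtain ⟨hFI, hFk⟩ := hFInv k hk01
        have haF : a < FInv k := by
          by_contra hcon
          push_neg at hcon
          have : F (FInv k) ≤ F a := hFmono hcon
          rw [hFk] at this
          linarith [hk.1]
        have h := hθloc k hk01
        exact lt_trans haF (lt_of_le_of_lt (le_max_right _ _) h.1)
    · intro a ha
      have hmem : Set.Ioo (0:ℝ) 1 ∈ nhdsWithin 1 (Set.Iio 1) :=
        Ioo_mem_nhdsLT_of_mem ⟨one_pos, le_rfl⟩
      filter_upwards [hmem] with k hk
      exact lt_trans (hθloc k hk).2 ha
end

section
/- The monopolist's surplus P(k) := ϑ(k)·(1 − k/F(ϑ(k)))·(1 − F(ϑ(k))) is strictly decreasing in k on (0,1). -/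
open Set MeasureTheory

/-- the monopolist's surplus `P(k) = ϑ(k)·(1 − k/F(ϑ(k)))·(1 − F(ϑ(k)))`
is strictly decreasing in `k` on `(0,1)`. -/
theorem stmt_11
    (vlo vhi : ℝ) (hvlo : 0 ≤ vlo) (hlt : vlo < vhi)
    (F f : ℝ → ℝ) (hFmono : Monotone F)
    (hFlo : F vlo = 0) (hFhi : F vhi = 1)
    (hFderiv : ∀ v ∈ Set.Icc vlo vhi, HasDerivAt F (f v) v)
    (hfpos : ∀ v ∈ Set.Icc vlo vhi, 0 < f v)
    (hfdiff : DifferentiableOn ℝ f (Set.Icc vlo vhi))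
    (hreg : StrictMonoOn (phi F f) (Set.Icc vlo vhi))
    (vM : ℝ) (hvM : IsLeast {v ∈ Set.Icc vlo vhi | 0 ≤ phi F f v} vM)
    (FInv : ℝ → ℝ)
    (hFInv : ∀ k ∈ Set.Ioo (0:ℝ) 1, FInv k ∈ Set.Icc vlo vhi ∧ F (FInv k) = k)
    (θ : ℝ → ℝ)
    (hθ : ∀ k ∈ Set.Ioo (0:ℝ) 1, θ k ∈ Set.Icc vlo vhi ∧
      k * Gfun F f vhi (θ k) = phi F f (θ k) * (F (θ k)) ^ 2)
    (hθuniq : ∀ k ∈ Set.Ioo (0:ℝ) 1, ∀ v ∈ Set.Icc vlo vhi,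
      k * Gfun F f vhi v = phi F f v * (F v) ^ 2 → v = θ k)
    (hθloc : ∀ k ∈ Set.Ioo (0:ℝ) 1, θ k ∈ Set.Ioo (max vM (FInv k)) vhi)
    :
    StrictAntiOn (fun k => θ k * (1 - k / F (θ k)) * (1 - F (θ k)))
      (Set.Ioo (0:ℝ) 1) := by
  -- Basic continuity facts
  have hIcc : Set.Icc vlo vhi ∈ {s : Set ℝ | True} := trivial
  have hfne : ∀ v ∈ Set.Icc vlo vhi, f v ≠ 0 := fun v hv => (hfpos v hv).ne'
  have hFcont : ContinuousOn F (Set.Icc vlo vhi) := fun v hv =>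
    ((hFderiv v hv).continuousAt).continuousWithinAt
  have hfcont : ContinuousOn f (Set.Icc vlo vhi) := hfdiff.continuousOn
  have hphicont : ContinuousOn (phi F f) (Set.Icc vlo vhi) := by
    apply (continuousOn_id).sub
    exact (continuousOn_const.sub hFcont).div hfcont hfne
  -- F strictly monotone on Icc
  have hFstrict : StrictMonoOn F (Set.Icc vlo vhi) := by
    apply strictMonoOn_of_deriv_pos (convex_Icc _ _) hFcont
    intro x hx
    rw [interior_Icc] at hx
    have hx' : x ∈ Set.Icc vlo vhi := Ioo_subset_Icc_self hx
    rw [(hFderiv x hx').deriv]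
    exact hfpos x hx'
  -- vM basic facts
  obtain ⟨⟨hvMmem, hvMphi⟩, hvMleast⟩ := hvM
  -- The integral identity : ∫ s in v..vhi, phi*f = v*(1-F v)  for v ∈ Icc
  have hGid : ∀ v ∈ Set.Icc vlo vhi, Gfun F f vhi v
      = phi F f v * F v + v * (1 - F v) := by
    intro v hv
    have hsub : Set.uIcc v vhi ⊆ Set.Icc vlo vhi := by
      rw [Set.uIcc_of_le hv.2]
      exact Set.Icc_subset_Icc hv.1 le_rfl
    have hint : ∫ s in v..vhi, phi F f s * f s = vhi * (F vhi - 1) - v * (F v - 1) := by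
      apply intervalIntegral.integral_eq_sub_of_hasDerivAt
      · intro s hs
        have hs' : s ∈ Set.Icc vlo vhi := hsub hs
        have h1 : HasDerivAt (fun s => s * (F s - 1)) (1 * (F s - 1) + s * f s) s := by
          exact (hasDerivAt_id s).mul ((hFderiv s hs').sub_const 1)
        refine h1.congr_deriv ?_
        have := hfne s hs'
        rw [phi, sub_mul, div_mul_cancel₀ _ this]
        all_goals ring
      · exact ((hphicont.mono hsub).mul (hfcont.mono hsub)).intervalIntegrable
    rw [Gfun, hint, hFhi]
    ring
  -- R(v) = v*(1 - F v) is strictly decreasing on [vM, vhi]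
  have hvMvhi : vM ≤ vhi := hvMmem.2
  have hRanti : StrictAntiOn (fun v => v * (1 - F v)) (Set.Icc vM vhi) := by
    apply strictAntiOn_of_deriv_neg (convex_Icc _ _)
    · exact (continuousOn_id.mul (continuousOn_const.sub
        (hFcont.mono (Set.Icc_subset_Icc hvMmem.1 le_rfl))))
    · intro x hx
      rw [interior_Icc] at hx
      have hx1 : x ∈ Set.Icc vlo vhi := ⟨hvMmem.1.trans hx.1.le, hx.2.le⟩
      have hphix : 0 < phi F f x := lt_of_le_of_lt hvMphi (hreg hvMmem hx1 hx.1)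
      have hfx := hfpos x hx1
      have hD : HasDerivAt (fun v => v * (1 - F v)) (-(f x * phi F f x)) x := by
        have h1 := (hasDerivAt_id x).mul ((hasDerivAt_const x (1:ℝ)).sub (hFderiv x hx1))
        refine h1.congr_deriv ?_
        have := hfne x hx1
        simp only [Pi.sub_apply, id]
        rw [mul_comm (f x), phi, sub_mul, div_mul_cancel₀ _ this]
        all_goals ring
      rw [hD.deriv]
      exact neg_neg_of_pos (mul_pos hfx hphix)
  -- Facts about θ k
  have hθfacts : ∀ k ∈ Set.Ioo (0:ℝ) 1,
      θ k ∈ Set.Icc vlo vhi ∧ 0 < θ k ∧ vM < θ k ∧ θ k < vhi ∧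
      k < F (θ k) ∧ F (θ k) < 1 ∧ 0 < phi F f (θ k) := by
    intro k hk
    obtain ⟨hθmem, _⟩ := hθ k hk
    obtain ⟨hθlo, hθhi⟩ := hθloc k hk
    obtain ⟨hFImem, hFIval⟩ := hFInv k hk
    have hvMlt : vM < θ k := lt_of_le_of_lt (le_max_left _ _) hθlo
    have hFIlt : FInv k < θ k := lt_of_le_of_lt (le_max_right _ _) hθlo
    have hFIgt : vlo < FInv k := by
      rcases lt_or_eq_of_le hFImem.1 with h | h
      · exact h
      · exfalso; rw [← h, hFlo] at hFIval; exact hk.1.ne hFIval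
    refine ⟨hθmem, ?_, hvMlt, hθhi, ?_, ?_, ?_⟩
    · linarith
    · have h := hFstrict hFImem hθmem hFIlt
      rw [hFIval] at h; exact h
    · rw [← hFhi]; exact hFstrict hθmem (Set.right_mem_Icc.mpr hlt.le) hθhi
    · exact lt_of_le_of_lt hvMphi (hreg hvMmem hθmem hvMlt)
  -- G(θ k) > 0
  have hGpos : ∀ k ∈ Set.Ioo (0:ℝ) 1,
      0 < phi F f (θ k) * F (θ k) + θ k * (1 - F (θ k)) := by
    intro k hk
    obtain ⟨hmem, hθ0, _, _, hFk, hF1, hphipos⟩ := hθfacts k hk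
    have hF0 : 0 < F (θ k) := lt_trans hk.1 hFk
    have := mul_pos hphipos hF0
    nlinarith
  -- P(k) = R(θk)^2 / G(θk)
  have hPval : ∀ k ∈ Set.Ioo (0:ℝ) 1,
      θ k * (1 - k / F (θ k)) * (1 - F (θ k))
      = (θ k * (1 - F (θ k)))^2 / (phi F f (θ k) * F (θ k) + θ k * (1 - F (θ k))) := by
    intro k hk
    obtain ⟨hmem, hθ0, _, _, hFk, hF1, hphipos⟩ := hθfacts k hk
    obtain ⟨_, hFOC⟩ := hθ k hk
    rw [hGid _ hmem] at hFOC
    have hF0 : (0:ℝ) < F (θ k) := lt_trans hk.1 hFk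
    have hG := hGpos k hk
    rw [eq_div_iff hG.ne']
    apply mul_left_cancel₀ hF0.ne'
    have hx : F (θ k) * (k / F (θ k)) = k := mul_div_cancel₀ _ hF0.ne'
    linear_combination (-(θ k * (1 - F (θ k))) * (phi F f (θ k) * F (θ k) + θ k * (1 - F (θ k)))) * hx + (-(θ k * (1 - F (θ k)))) * hFOC
  -- θ strictly monotone
  have hθmono : ∀ k₁ ∈ Set.Ioo (0:ℝ) 1, ∀ k₂ ∈ Set.Ioo (0:ℝ) 1,
      k₁ < k₂ → θ k₁ < θ k₂ := by
    intro k₁ hk₁ k₂ hk₂ h12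
    set D : ℝ → ℝ := fun v => k₁ * (phi F f v * F v + v * (1 - F v)) - phi F f v * (F v)^2
      with hDdef
    obtain ⟨hFI1mem, hFI1val⟩ := hFInv k₁ hk₁
    obtain ⟨hFI2mem, hFI2val⟩ := hFInv k₂ hk₂
    obtain ⟨hθ2mem, hθ2pos, hvM2, hθ2hi, hF2k, hF21, hphi2⟩ := hθfacts k₂ hk₂
    set v₀ := max vM (FInv k₁) with hv₀def
    have hv₀mem : v₀ ∈ Set.Icc vlo vhi := by
      constructor
      · exact le_max_of_le_right hFI1mem.1
      · exact max_le hvMmem.2 hFI1mem.2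
    -- v₀ < θ k₂
    have hFI12 : FInv k₁ < FInv k₂ := by
      by_contra h
      push_neg at h
      have := hFmono h
      rw [hFI1val, hFI2val] at this
      linarith
    have hv₀lt : v₀ < θ k₂ := by
      have h1 := (hθloc k₂ hk₂).1
      have : v₀ ≤ max vM (FInv k₂) := max_le_max le_rfl hFI12.le
      linarith [le_max_left vM (FInv k₂), le_max_right vM (FInv k₂)]
    -- D v₀ > 0
    have hDv₀ : 0 < D v₀ := by
      rcases le_or_gt vM (FInv k₁) with h | h
      · have hv₀eq : v₀ = FInv k₁ := max_eq_right h
        have hFIgt : vlo < FInv k₁ := by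
          rcases lt_or_eq_of_le hFI1mem.1 with h' | h'
          · exact h'
          · exfalso; rw [← h', hFlo] at hFI1val; exact hk₁.1.ne hFI1val
        rw [hDdef, hv₀eq]
        simp only [hFI1val]
        have : 0 < FInv k₁ := lt_of_le_of_lt hvlo hFIgt
        nlinarith [mul_pos (mul_pos hk₁.1 this) (sub_pos.mpr hk₁.2)]
      · -- v₀ = vM and φ(vM) = 0
        have hv₀eq : v₀ = vM := max_eq_left h.le
        have hvMgt : vlo < vM := lt_of_le_of_lt hFI1mem.1 h
        -- φ(vM) ≤ 0 by left continuity
        have hphivM : phi F f vM = 0 := by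
          refine le_antisymm ?_ hvMphi
          have hcw : ContinuousWithinAt (phi F f) (Set.Icc vlo vhi) vM :=
            hphicont vM hvMmem
          have hcw2 : ContinuousWithinAt (phi F f) (Set.Ico vlo vM) vM := by
            apply hcw.mono
            intro x hx
            exact ⟨hx.1, hx.2.le.trans hvMmem.2⟩
          have hne : (nhdsWithin vM (Set.Ico vlo vM)).NeBot := by
            apply mem_closure_iff_nhdsWithin_neBot.mp
            rw [closure_Ico (ne_of_lt hvMgt)]
            exact ⟨hvMgt.le, le_rfl⟩
          apply le_of_tendsto hcw2
          filter_upwards [self_mem_nhdsWithin] with x hx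
          by_contra hc
          push_neg at hc
          have : vM ≤ x := hvMleast ⟨⟨hx.1, hx.2.le.trans hvMmem.2⟩, hc.le⟩
          exact absurd hx.2 (not_lt.mpr this)
        rw [hDdef, hv₀eq]
        simp only [hphivM]
        have hFvM : F vM < 1 := by
          rw [← hFhi]
          exact hFstrict hvMmem (Set.right_mem_Icc.mpr hlt.le)
            (lt_of_lt_of_le (lt_of_le_of_lt (le_max_left _ _) (hθloc k₂ hk₂).1) hθ2mem.2)
        have : 0 < vM := lt_of_le_of_lt hvlo hvMgt
        nlinarith [mul_pos (mul_pos hk₁.1 this) (sub_pos.mpr hFvM)]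
    -- D (θ k₂) < 0
    have hDθ2 : D (θ k₂) < 0 := by
      obtain ⟨_, hFOC2⟩ := hθ k₂ hk₂
      rw [hGid _ hθ2mem] at hFOC2
      have hG2 := hGpos k₂ hk₂
      rw [hDdef]
      simp only
      nlinarith
    -- IVT
    have hDcont : ContinuousOn D (Set.Icc v₀ (θ k₂)) := by
      have hsub : Set.Icc v₀ (θ k₂) ⊆ Set.Icc vlo vhi :=
        Set.Icc_subset_Icc hv₀mem.1 hθ2mem.2
      apply ContinuousOn.sub
      · exact continuousOn_const.mul (((hphicont.mono hsub).mul (hFcont.mono hsub)).add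
          (continuousOn_id.mul (continuousOn_const.sub (hFcont.mono hsub))))
      · exact (hphicont.mono hsub).mul ((hFcont.mono hsub).pow 2)
    have hmem0 : (0:ℝ) ∈ Set.Icc (D (θ k₂)) (D v₀) := ⟨hDθ2.le, hDv₀.le⟩
    obtain ⟨c, hc, hDc⟩ := intermediate_value_Icc' hv₀lt.le hDcont hmem0
    have hcmem : c ∈ Set.Icc vlo vhi := ⟨hv₀mem.1.trans hc.1, hc.2.trans hθ2mem.2⟩
    have hceq : c = θ k₁ := by
      apply hθuniq k₁ hk₁ c hcmem
      rw [hGid _ hcmem]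
      rw [hDdef] at hDc
      simp only at hDc
      linarith
    have hcne : c ≠ θ k₂ := by
      intro h
      rw [h] at hDc
      linarith
    rw [← hceq]
    exact lt_of_le_of_ne hc.2 hcne
  -- Main comparison
  intro k₁ hk₁ k₂ hk₂ h12
  simp only
  rw [hPval k₁ hk₁, hPval k₂ hk₂]
  obtain ⟨hθ1mem, hθ1pos, hvM1, hθ1hi, hF1k, hF11, hphi1⟩ := hθfacts k₁ hk₁
  obtain ⟨hθ2mem, hθ2pos, hvM2, hθ2hi, hF2k, hF21, hphi2⟩ := hθfacts k₂ hk₂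
  have hθ12 : θ k₁ < θ k₂ := hθmono k₁ hk₁ k₂ hk₂ h12
  set R₁ := θ k₁ * (1 - F (θ k₁)) with hR1
  set R₂ := θ k₂ * (1 - F (θ k₂)) with hR2
  have hR12 : R₂ < R₁ := hRanti ⟨hvM1.le, hθ1hi.le⟩ ⟨hvM2.le, hθ2hi.le⟩ hθ12
  have hR2pos : 0 < R₂ := mul_pos hθ2pos (by linarith)
  have hphiF12 : phi F f (θ k₁) * F (θ k₁) < phi F f (θ k₂) * F (θ k₂) := by
    have hphi12 : phi F f (θ k₁) < phi F f (θ k₂) := hreg hθ1mem hθ2mem hθ12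
    have hF12 : F (θ k₁) < F (θ k₂) := hFstrict hθ1mem hθ2mem hθ12
    have hF1pos : 0 < F (θ k₁) := lt_trans hk₁.1 hF1k
    nlinarith
  have hG1 := hGpos k₁ hk₁
  have hG2 := hGpos k₂ hk₂
  rw [div_lt_div_iff₀ hG2 hG1]
  have hphiF1pos : 0 < phi F f (θ k₁) * F (θ k₁) :=
    mul_pos hphi1 (lt_trans hk₁.1 hF1k)
  have hR1pos : 0 < R₁ := hR2pos.trans hR12
  have hA2pos : 0 < phi F f (θ k₂) * F (θ k₂) := hphiF1pos.trans hphiF12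
  nlinarith [mul_pos (mul_pos hR2pos hR2pos) (sub_pos.mpr hphiF12),
    mul_pos (mul_pos hR1pos hR2pos) (sub_pos.mpr hR12),
    mul_pos (mul_pos (sub_pos.mpr hR12) (by linarith : (0:ℝ) < R₁ + R₂)) hA2pos]
end

section
/- The rationing probability π(k) := k/F(ϑ(k)) is strictly increasing in k on (0,1). -/
open Set MeasureTheory

private lemma core_ineq (Pu Pw Fu Fw I J Gu Gw : ℝ)
    (h1 : 0 < Pu) (h2 : Pu < Pw) (h3 : 0 < Fu) (h4 : Fu < Fw)
    (hGu : Gu = Pu * Fu + J) (hJ : 0 ≤ J)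
    (hGw : Gw = Gu + Pw * Fw - Pu * Fu - I)
    (hI : Pu * (Fw - Fu) ≤ I) :
    Pu * Fu * Gw < Pw * Fw * Gu := by
  have hA : Pu * Fu < Pw * Fw := by nlinarith
  have h5 : 0 ≤ (Pw * Fw - Pu * Fu) * J := mul_nonneg (by linarith) hJ
  have h6 : Pu * Fu * (Pu * (Fw - Fu)) ≤ Pu * Fu * I := by
    apply mul_le_mul_of_nonneg_left hI (by positivity)
  have hexp : Pw * Fw * Gu - Pu * Fu * Gw = (Pw * Fw - Pu * Fu) * J + Pu * Fu * I := by
    rw [hGw, hGu]; ring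
  linarith [h5, h6, mul_pos (mul_pos h1 h3) (mul_pos h1 (sub_pos.mpr h4))]

/-- the rationing probability `π(k) = k/F(ϑ(k))` is strictly increasing
in `k` on `(0,1)`. -/
theorem stmt_12
    (vlo vhi : ℝ) (hvlo : 0 ≤ vlo) (hlt : vlo < vhi)
    (F f : ℝ → ℝ) (hFmono : Monotone F)
    (hFlo : F vlo = 0) (hFhi : F vhi = 1)
    (hFderiv : ∀ v ∈ Set.Icc vlo vhi, HasDerivAt F (f v) v)
    (hfpos : ∀ v ∈ Set.Icc vlo vhi, 0 < f v)
    (hfdiff : DifferentiableOn ℝ f (Set.Icc vlo vhi))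
    (hreg : StrictMonoOn (phi F f) (Set.Icc vlo vhi))
    (vM : ℝ) (hvM : IsLeast {v ∈ Set.Icc vlo vhi | 0 ≤ phi F f v} vM)
    (FInv : ℝ → ℝ)
    (hFInv : ∀ k ∈ Set.Ioo (0:ℝ) 1, FInv k ∈ Set.Icc vlo vhi ∧ F (FInv k) = k)
    (θ : ℝ → ℝ)
    (hθ : ∀ k ∈ Set.Ioo (0:ℝ) 1, θ k ∈ Set.Icc vlo vhi ∧
      k * Gfun F f vhi (θ k) = phi F f (θ k) * (F (θ k)) ^ 2)
    (hθuniq : ∀ k ∈ Set.Ioo (0:ℝ) 1, ∀ v ∈ Set.Icc vlo vhi,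
      k * Gfun F f vhi v = phi F f v * (F v) ^ 2 → v = θ k)
    (hθloc : ∀ k ∈ Set.Ioo (0:ℝ) 1, θ k ∈ Set.Ioo (max vM (FInv k)) vhi)
    :
    StrictMonoOn (fun k => k / F (θ k)) (Set.Ioo (0:ℝ) 1) := by
  have hvhiI : vhi ∈ Set.Icc vlo vhi := right_mem_Icc.mpr hlt.le
  have hFcont : ContinuousOn F (Set.Icc vlo vhi) := fun v hv =>
    (hFderiv v hv).continuousAt.continuousWithinAt
  have hfcont : ContinuousOn f (Set.Icc vlo vhi) := hfdiff.continuousOn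
  have hfne : ∀ v ∈ Set.Icc vlo vhi, f v ≠ 0 := fun v hv => (hfpos v hv).ne'
  have hphicont : ContinuousOn (phi F f) (Set.Icc vlo vhi) := by
    unfold phi
    exact continuousOn_id.sub ((continuousOn_const.sub hFcont).div hfcont hfne)
  have hgcont : ContinuousOn (fun s => phi F f s * f s) (Set.Icc vlo vhi) :=
    hphicont.mul hfcont
  have hFstrict : StrictMonoOn F (Set.Icc vlo vhi) := by
    apply strictMonoOn_of_deriv_pos (convex_Icc _ _) hFcont
    intro x hx
    rw [interior_Icc] at hx
    have hx' : x ∈ Set.Icc vlo vhi := Ioo_subset_Icc_self hx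
    rw [(hFderiv x hx').deriv]
    exact hfpos x hx'
  have hII : ∀ u ∈ Set.Icc vlo vhi, ∀ w ∈ Set.Icc vlo vhi,
      IntervalIntegrable (fun s => phi F f s * f s) volume u w := fun u hu w hw =>
    (hgcont.mono (uIcc_subset_Icc hu hw)).intervalIntegrable
  have hfII : ∀ u ∈ Set.Icc vlo vhi, ∀ w ∈ Set.Icc vlo vhi,
      IntervalIntegrable f volume u w := fun u hu w hw =>
    (hfcont.mono (uIcc_subset_Icc hu hw)).intervalIntegrable
  have hFTC : ∀ u ∈ Set.Icc vlo vhi, ∀ w ∈ Set.Icc vlo vhi,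
      ∫ s in u..w, f s = F w - F u := fun u hu w hw =>
    intervalIntegral.integral_eq_sub_of_hasDerivAt
      (fun x hx => hFderiv x (uIcc_subset_Icc hu hw hx)) (hfII u hu w hw)
  -- lower bound on the integral of φ·f over [u, w]
  have hIlo : ∀ u ∈ Set.Icc vlo vhi, ∀ w ∈ Set.Icc vlo vhi, u ≤ w →
      phi F f u * (F w - F u) ≤ ∫ s in u..w, phi F f s * f s := by
    intro u hu w hw huw
    have hmono : ∫ s in u..w, phi F f u * f s ≤ ∫ s in u..w, phi F f s * f s := by
      apply intervalIntegral.integral_mono_on huw ((hfII u hu w hw).const_mul _)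
        (hII u hu w hw)
      intro x hx
      have hx' : x ∈ Set.Icc vlo vhi := ⟨le_trans hu.1 hx.1, le_trans hx.2 hw.2⟩
      exact mul_le_mul_of_nonneg_right (hreg.monotoneOn hu hx' hx.1) (hfpos x hx').le
    calc phi F f u * (F w - F u) = ∫ s in u..w, phi F f u * f s := by
          rw [intervalIntegral.integral_const_mul, hFTC u hu w hw]
      _ ≤ _ := hmono
  -- decomposition of Gfun
  have hGdecomp : ∀ u ∈ Set.Icc vlo vhi, ∀ w ∈ Set.Icc vlo vhi,
      Gfun F f vhi w = Gfun F f vhi u + phi F f w * F w - phi F f u * F u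
        - ∫ s in u..w, phi F f s * f s := by
    intro u hu w hw
    have hadd := intervalIntegral.integral_add_adjacent_intervals
      (hII u hu w hw) (hII w hw vhi hvhiI)
    unfold Gfun
    linarith [hadd]
  -- per-capacity facts
  have hkey : ∀ k ∈ Set.Ioo (0:ℝ) 1, θ k ∈ Set.Icc vlo vhi ∧ 0 < phi F f (θ k) ∧
      0 < F (θ k) ∧ 0 ≤ (∫ s in (θ k)..vhi, phi F f s * f s) ∧
      0 < Gfun F f vhi (θ k) := by
    intro k hk
    obtain ⟨hmem, _⟩ := hθ k hk
    obtain ⟨hloc1, hloc2⟩ := hθloc k hk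
    have hvMlt : vM < θ k := lt_of_le_of_lt (le_max_left _ _) hloc1
    have hFIlt : FInv k < θ k := lt_of_le_of_lt (le_max_right _ _) hloc1
    have hphipos : 0 < phi F f (θ k) :=
      lt_of_le_of_lt hvM.1.2 (hreg hvM.1.1 hmem hvMlt)
    have hFpos : 0 < F (θ k) := by
      have h2 := (hFInv k hk).2
      calc (0:ℝ) < k := hk.1
        _ = F (FInv k) := h2.symm
        _ ≤ F (θ k) := hFmono hFIlt.le
    have hJ : 0 ≤ ∫ s in (θ k)..vhi, phi F f s * f s := by
      apply intervalIntegral.integral_nonneg hloc2.le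
      intro x hx
      have hx' : x ∈ Set.Icc vlo vhi := ⟨le_trans hmem.1 hx.1, hx.2⟩
      have hphix : 0 ≤ phi F f x := le_trans hphipos.le (hreg.monotoneOn hmem hx' hx.1)
      exact mul_nonneg hphix (hfpos x hx').le
    refine ⟨hmem, hphipos, hFpos, hJ, ?_⟩
    have : Gfun F f vhi (θ k) = phi F f (θ k) * F (θ k)
        + ∫ s in (θ k)..vhi, phi F f s * f s := rfl
    nlinarith [mul_pos hphipos hFpos]
  -- the main comparison inequality
  have hmain : ∀ a ∈ Set.Ioo (0:ℝ) 1, ∀ b ∈ Set.Ioo (0:ℝ) 1, θ a < θ b →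
      phi F f (θ a) * F (θ a) * Gfun F f vhi (θ b)
        < phi F f (θ b) * F (θ b) * Gfun F f vhi (θ a) := by
    intro a ha b hb hv
    obtain ⟨ma, pa, Fa, Ja, -⟩ := hkey a ha
    obtain ⟨mb, -, -, -, -⟩ := hkey b hb
    refine core_ineq _ _ _ _ (∫ s in (θ a)..(θ b), phi F f s * f s)
      (∫ s in (θ a)..vhi, phi F f s * f s) _ _ pa (hreg ma mb hv) Fa
      (hFstrict ma mb hv) rfl Ja (hGdecomp (θ a) ma (θ b) mb) ?_
    exact hIlo (θ a) ma (θ b) mb hv.le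
  -- now the statement
  intro a ha b hb hab
  obtain ⟨ma, pa, Fa, -, Ga⟩ := hkey a ha
  obtain ⟨mb, pb, Fb, -, Gb⟩ := hkey b hb
  have foca := (hθ a ha).2
  have focb := (hθ b hb).2
  have hθmono : θ a < θ b := by
    rcases lt_trichotomy (θ a) (θ b) with h | h | h
    · exact h
    · exfalso
      rw [h] at foca
      have : a = b := by
        have := foca.trans focb.symm
        exact mul_right_cancel₀ Gb.ne' this
      linarith [hab, this.le]
    · exfalso
      have hcore := hmain b hb a ha h
      have hFlt : F (θ b) < F (θ a) := hFstrict mb ma h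
      have key : b * Gfun F f vhi (θ b) * Gfun F f vhi (θ a)
          < a * Gfun F f vhi (θ a) * Gfun F f vhi (θ b) := by
        calc b * Gfun F f vhi (θ b) * Gfun F f vhi (θ a)
            = F (θ b) * (phi F f (θ b) * F (θ b) * Gfun F f vhi (θ a)) := by
              rw [focb]; ring
          _ < F (θ b) * (phi F f (θ a) * F (θ a) * Gfun F f vhi (θ b)) :=
              mul_lt_mul_of_pos_left hcore Fb
          _ ≤ F (θ a) * (phi F f (θ a) * F (θ a) * Gfun F f vhi (θ b)) := by
              apply mul_le_mul_of_nonneg_right hFlt.le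
              positivity
          _ = (phi F f (θ a) * F (θ a) ^ 2) * Gfun F f vhi (θ b) := by ring
          _ = a * Gfun F f vhi (θ a) * Gfun F f vhi (θ b) := by rw [← foca]
      have : b < a := by
        have hGG : 0 < Gfun F f vhi (θ a) * Gfun F f vhi (θ b) := mul_pos Ga Gb
        nlinarith
      linarith
  have hcore := hmain a ha b hb hθmono
  show a / F (θ a) < b / F (θ b)
  rw [div_lt_div_iff₀ Fa Fb]
  have key : a * F (θ b) * (Gfun F f vhi (θ a) * Gfun F f vhi (θ b))
      < b * F (θ a) * (Gfun F f vhi (θ a) * Gfun F f vhi (θ b)) := by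
    calc a * F (θ b) * (Gfun F f vhi (θ a) * Gfun F f vhi (θ b))
        = (a * Gfun F f vhi (θ a)) * (F (θ b) * Gfun F f vhi (θ b)) := by ring
      _ = (phi F f (θ a) * F (θ a) ^ 2) * (F (θ b) * Gfun F f vhi (θ b)) := by rw [foca]
      _ = (F (θ a) * F (θ b)) * (phi F f (θ a) * F (θ a) * Gfun F f vhi (θ b)) := by ring
      _ < (F (θ a) * F (θ b)) * (phi F f (θ b) * F (θ b) * Gfun F f vhi (θ a)) :=
          mul_lt_mul_of_pos_left hcore (mul_pos Fa Fb)
      _ = (phi F f (θ b) * F (θ b) ^ 2) * (F (θ a) * Gfun F f vhi (θ a)) := by ring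
      _ = (b * Gfun F f vhi (θ b)) * (F (θ a) * Gfun F f vhi (θ a)) := by rw [focb]
      _ = b * F (θ a) * (Gfun F f vhi (θ a) * Gfun F f vhi (θ b)) := by ring
  exact lt_of_mul_lt_mul_right key (mul_pos Ga Gb).le
end

section
/- For all capacities k', k'' ∈ (0,1) with k' < k'' and every type v ∈ V with v ≤ ϑ(k'), the consumer surplus is nondecreasing in capacity: U(v, k') ≤ U(v, k''). In particular, low-value consumers who rely on the public option weakly benefit from any expansion of the public option's capacity. -/
open Set MeasureTheory Filter Topology

/-- Consumer surplus in the mixed market: `U(v,k) = π(k)·v` if `v < ϑ(k)` and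
`U(v,k) = v − p(k)` if `v ≥ ϑ(k)`, where `π(k) = k/F(ϑ(k))` and
`p(k) = ϑ(k)·(1 − π(k))`. -/
noncomputable def Ucs (F θ : ℝ → ℝ) (v k : ℝ) : ℝ :=
  if v < θ k then (k / F (θ k)) * v else v - θ k * (1 - k / F (θ k))

open Filter Topology in
/-- If `g` is strictly monotone on `[a,b]` and differentiable at an interior point,
its derivative there is nonnegative. -/
lemma aux_deriv_nonneg_of_strictMonoOn {g : ℝ → ℝ} {a b x d : ℝ}
    (hmono : StrictMonoOn g (Set.Icc a b))
    (hx : x ∈ Set.Ioo a b) (hd : HasDerivAt g d x) : 0 ≤ d := by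
  have htend : Tendsto (slope g x) (𝓝[>] x) (𝓝 d) :=
    (hasDerivAt_iff_tendsto_slope.1 hd).mono_left
      (nhdsWithin_mono x fun y hy => ne_of_gt hy)
  refine ge_of_tendsto htend ?_
  filter_upwards [Ioo_mem_nhdsGT_of_mem ⟨le_rfl, hx.2⟩] with y hy
  have hxI : x ∈ Set.Icc a b := ⟨hx.1.le, hx.2.le⟩
  have hyI : y ∈ Set.Icc a b := ⟨hx.1.le.trans hy.1.le, hy.2.le⟩
  have hgle : g x ≤ g y := (hmono hxI hyI hy.1).le
  have hxy : (0:ℝ) < y - x := by linarith [hy.1]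
  rw [slope_def_field]
  exact div_nonneg (by linarith) hxy.le

/-- for capacities `k' < k''` in `(0,1)` and every type `v ∈ V` with
`v ≤ ϑ(k')`, consumer surplus is nondecreasing in capacity: `U(v,k') ≤ U(v,k'')`. -/
theorem stmt_13
    (vlo vhi : ℝ) (hvlo : 0 ≤ vlo) (hlt : vlo < vhi)
    (F f : ℝ → ℝ) (hFmono : Monotone F)
    (hFlo : F vlo = 0) (hFhi : F vhi = 1)
    (hFderiv : ∀ v ∈ Set.Icc vlo vhi, HasDerivAt F (f v) v)
    (hfpos : ∀ v ∈ Set.Icc vlo vhi, 0 < f v)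
    (hfdiff : DifferentiableOn ℝ f (Set.Icc vlo vhi))
    (hreg : StrictMonoOn (phi F f) (Set.Icc vlo vhi))
    (vM : ℝ) (hvM : IsLeast {v ∈ Set.Icc vlo vhi | 0 ≤ phi F f v} vM)
    (FInv : ℝ → ℝ)
    (hFInv : ∀ k ∈ Set.Ioo (0:ℝ) 1, FInv k ∈ Set.Icc vlo vhi ∧ F (FInv k) = k)
    (θ : ℝ → ℝ)
    (hθ : ∀ k ∈ Set.Ioo (0:ℝ) 1, θ k ∈ Set.Icc vlo vhi ∧
      k * Gfun F f vhi (θ k) = phi F f (θ k) * (F (θ k)) ^ 2)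
    (hθuniq : ∀ k ∈ Set.Ioo (0:ℝ) 1, ∀ v ∈ Set.Icc vlo vhi,
      k * Gfun F f vhi v = phi F f v * (F v) ^ 2 → v = θ k)
    (hθloc : ∀ k ∈ Set.Ioo (0:ℝ) 1, θ k ∈ Set.Ioo (max vM (FInv k)) vhi)
    :
    ∀ k' ∈ Set.Ioo (0:ℝ) 1, ∀ k'' ∈ Set.Ioo (0:ℝ) 1, k' < k'' →
      ∀ v ∈ Set.Icc vlo vhi, v ≤ θ k' →
        Ucs F θ v k' ≤ Ucs F θ v k'' := by
  set φ := phi F f with hφdef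
  set G := Gfun F f vhi with hGdef
  set I := Set.Icc vlo vhi with hIdef
  have hvMI : vM ∈ I := hvM.1.1
  have hφvM : 0 ≤ φ vM := hvM.1.2
  have hFcont : ContinuousOn F I := fun v hv => ((hFderiv v hv).continuousAt).continuousWithinAt
  have hfcont : ContinuousOn f I := hfdiff.continuousOn
  have hfne : ∀ v ∈ I, f v ≠ 0 := fun v hv => (hfpos v hv).ne'
  have hφcont : ContinuousOn φ I := by
    have : ContinuousOn (fun v => v - (1 - F v) / f v) I :=
      continuousOn_id.sub ((continuousOn_const.sub hFcont).div hfcont hfne)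
    exact this
  have hgcont : ContinuousOn (fun s => φ s * f s) I := hφcont.mul hfcont
  have hFnonneg : ∀ v ∈ I, 0 ≤ F v := fun v hv => hFlo ▸ hFmono hv.1
  have hφmono : MonotoneOn φ I := hreg.monotoneOn
  have hφnn : ∀ v ∈ I, vM ≤ v → 0 ≤ φ v := fun v hv h => hφvM.trans (hφmono hvMI hv h)
  have hφpos : ∀ v ∈ I, vM < v → 0 < φ v := fun v hv h => lt_of_le_of_lt hφvM (hreg hvMI hv h)
  have hvhi0 : 0 < vhi := lt_of_le_of_lt hvlo hlt
  have hvhiI : vhi ∈ I := ⟨hlt.le, le_rfl⟩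
  have hφvhi : φ vhi = vhi := by
    simp [hφdef, phi, hFhi]
  have hgint : ∀ v ∈ I, IntervalIntegrable (fun s => φ s * f s) volume v vhi :=
    fun v hv => (hgcont.mono (Icc_subset_Icc hv.1 le_rfl)).intervalIntegrable_of_Icc hv.2
  have hInn : ∀ v ∈ I, vM ≤ v → 0 ≤ ∫ s in v..vhi, φ s * f s := by
    intro v hv hvm
    refine intervalIntegral.integral_nonneg hv.2 (fun s hs => ?_)
    have hsI : s ∈ I := ⟨hv.1.trans hs.1, hs.2⟩
    exact mul_nonneg (hφnn s hsI (hvm.trans hs.1)) (hfpos s hsI).le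
  have hGpos : ∀ v ∈ I, vM ≤ v → 0 < G v := by
    intro v hv hvm
    rcases eq_or_lt_of_le hv.2 with heq | hlt'
    · rw [hGdef, heq]
      show 0 < phi F f vhi * F vhi + ∫ s in vhi..vhi, phi F f s * f s
      rw [intervalIntegral.integral_same]
      have : phi F f vhi = vhi := hφvhi
      rw [this, hFhi]; linarith
    · have hintpos : 0 < ∫ s in v..vhi, φ s * f s := by
        refine intervalIntegral.intervalIntegral_pos_of_pos_on (hgint v hv) (fun x hx => ?_) hlt'
        have hxI : x ∈ I := ⟨hv.1.trans hx.1.le, hx.2.le⟩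
        exact mul_pos (hφpos x hxI (lt_of_le_of_lt hvm hx.1)) (hfpos x hxI)
      have h1 : 0 ≤ φ v * F v := mul_nonneg (hφnn v hv hvm) (hFnonneg v hv)
      have : G v = φ v * F v + ∫ s in v..vhi, φ s * f s := rfl
      linarith [this ▸ (by linarith : (0:ℝ) < φ v * F v + ∫ s in v..vhi, φ s * f s)]
  have hGcont : ContinuousOn G I := by
    have hio : IntegrableOn (fun s => φ s * f s) (uIcc vlo vhi) volume := by
      rw [uIcc_of_le hlt.le]; exact hgcont.integrableOn_Icc
    have h1 : ContinuousOn (fun v => ∫ s in v..vhi, φ s * f s) I := by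
      have := intervalIntegral.continuousOn_primitive_interval_left hio
      rwa [uIcc_of_le hlt.le] at this
    exact (hφcont.mul hFcont).add h1
  have hIccsub : Set.Icc vM vhi ⊆ I := Icc_subset_Icc hvMI.1 le_rfl
  set hfun : ℝ → ℝ := fun v => φ v * F v / G v with hfun_def
  have hhcont : ContinuousOn hfun (Set.Icc vM vhi) :=
    ((hφcont.mono hIccsub).mul (hFcont.mono hIccsub)).div (hGcont.mono hIccsub)
      (fun v hv => (hGpos v (hIccsub hv) hv.1).ne')
  have hderivpos : ∀ x ∈ interior (Set.Icc vM vhi), 0 < deriv hfun x := by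
    rw [interior_Icc]
    intro x hx
    have hxIoo : x ∈ Set.Ioo vlo vhi := ⟨lt_of_le_of_lt hvMI.1 hx.1, hx.2⟩
    have hxI : x ∈ I := ⟨hxIoo.1.le, hxIoo.2.le⟩
    have hxnhds : I ∈ 𝓝 x := Icc_mem_nhds hxIoo.1 hxIoo.2
    have hFd : HasDerivAt F (f x) x := hFderiv x hxI
    have hfd : DifferentiableAt ℝ f x := hfdiff.differentiableAt hxnhds
    have hφdiff : DifferentiableAt ℝ φ x := by
      have : DifferentiableAt ℝ (fun v => v - (1 - F v) / f v) x :=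
        differentiableAt_id.sub
          (((differentiableAt_const _).sub hFd.differentiableAt).div hfd (hfne x hxI))
      exact this
    set d := deriv φ x with hd
    have hφd : HasDerivAt φ d x := hφdiff.hasDerivAt
    have hdnn : 0 ≤ d := aux_deriv_nonneg_of_strictMonoOn hreg hxIoo hφd
    have hnum : HasDerivAt (fun v => φ v * F v) (d * F x + φ x * f x) x := hφd.mul hFd
    have hmeas : StronglyMeasurableAtFilter (fun s => φ s * f s) (𝓝 x) volume :=
      ContinuousOn.stronglyMeasurableAtFilter isOpen_Ioo
        (hgcont.mono Ioo_subset_Icc_self) x hxIoo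
    have hIntd : HasDerivAt (fun v => ∫ s in v..vhi, φ s * f s) (-(φ x * f x)) x :=
      intervalIntegral.integral_hasDerivAt_left (hgint x hxI) hmeas (hgcont.continuousAt hxnhds)
    have hGd : HasDerivAt G (d * F x) x := by
      have hsum := hnum.add hIntd
      have : d * F x + φ x * f x + -(φ x * f x) = d * F x := by ring
      rw [this] at hsum
      exact hsum
    have hGne : G x ≠ 0 := (hGpos x hxI hx.1.le).ne'
    have hhd : HasDerivAt hfun
        (((d * F x + φ x * f x) * G x - φ x * F x * (d * F x)) / (G x) ^ 2) x :=
      hnum.div hGd hGne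
    rw [hhd.deriv]
    apply div_pos
    · have hGx : G x = φ x * F x + ∫ s in x..vhi, φ s * f s := rfl
      have hInt : 0 ≤ ∫ s in x..vhi, φ s * f s := hInn x hxI hx.1.le
      have hφx : 0 < φ x := hφpos x hxI hx.1
      have hfx : 0 < f x := hfpos x hxI
      have hFx : 0 ≤ F x := hFnonneg x hxI
      have hGxpos : 0 < G x := hGpos x hxI hx.1.le
      have key : (d * F x + φ x * f x) * G x - φ x * F x * (d * F x)
          = d * F x * (∫ s in x..vhi, φ s * f s) + φ x * f x * G x := by
        rw [hGx]; ring
      rw [key]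
      exact add_pos_of_nonneg_of_pos (mul_nonneg (mul_nonneg hdnn hFx) hInt)
        (mul_pos (mul_pos hφx hfx) hGxpos)
    · positivity
  have hhmono : StrictMonoOn hfun (Set.Icc vM vhi) :=
    strictMonoOn_of_deriv_pos (convex_Icc _ _) hhcont hderivpos
  have hθfacts : ∀ k ∈ Set.Ioo (0:ℝ) 1, θ k ∈ Set.Icc vM vhi ∧ 0 < F (θ k) ∧ k ≤ F (θ k) ∧
      hfun (θ k) = k / F (θ k) := by
    intro k hk
    obtain ⟨hθI, hFOC⟩ := hθ k hk
    obtain ⟨hθlo, hθhi⟩ := hθloc k hk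
    have hvMθ : vM < θ k := lt_of_le_of_lt (le_max_left _ _) hθlo
    have hFiθ : FInv k < θ k := lt_of_le_of_lt (le_max_right _ _) hθlo
    have hFk : F (FInv k) = k := (hFInv k hk).2
    have hFge : k ≤ F (θ k) := le_trans (le_of_eq hFk.symm) (hFmono hFiθ.le)
    have hFpos' : 0 < F (θ k) := lt_of_lt_of_le hk.1 hFge
    have hGθ : 0 < G (θ k) := hGpos _ hθI hvMθ.le
    refine ⟨⟨hvMθ.le, hθI.2⟩, hFpos', hFge, ?_⟩
    rw [hfun_def]
    show φ (θ k) * F (θ k) / G (θ k) = k / F (θ k)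
    rw [div_eq_div_iff hGθ.ne' hFpos'.ne']
    nlinarith [hFOC]
  intro k' hk' k'' hk'' hkk v hv hvθ
  obtain ⟨hθ'mem, hF'pos, hF'ge, hh'⟩ := hθfacts k' hk'
  obtain ⟨hθ''mem, hF''pos, hF''ge, hh''⟩ := hθfacts k'' hk''
  have hθlt : θ k' < θ k'' := by
    by_contra hcon
    push_neg at hcon
    have h1 : hfun (θ k'') ≤ hfun (θ k') := hhmono.monotoneOn hθ''mem hθ'mem hcon
    rw [hh', hh''] at h1
    have h2 : F (θ k'') ≤ F (θ k') := hFmono hcon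
    have h3 := mul_le_mul h1 h2 hF''pos.le
      (div_nonneg hk'.1.le (hFnonneg _ (hIccsub hθ'mem)))
    rw [div_mul_cancel₀ _ hF''pos.ne', div_mul_cancel₀ _ hF'pos.ne'] at h3
    linarith
  have hpile : k' / F (θ k') ≤ k'' / F (θ k'') := by
    have := (hhmono hθ'mem hθ''mem hθlt).le
    rwa [hh', hh''] at this
  have hv0 : 0 ≤ v := le_trans hvlo hv.1
  have hvθ'' : v < θ k'' := lt_of_le_of_lt hvθ hθlt
  unfold Ucs
  rw [if_pos hvθ'']
  by_cases hc : v < θ k'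
  · rw [if_pos hc]
    exact mul_le_mul_of_nonneg_right hpile hv0
  · rw [if_neg hc]
    have hveq : v = θ k' := le_antisymm hvθ (not_lt.1 hc)
    have hmul := mul_le_mul_of_nonneg_right hpile hv0
    have : v - θ k' * (1 - k' / F (θ k')) = k' / F (θ k') * v := by rw [hveq]; ring
    linarith [this ▸ hmul]
end

section
/- Suppose that for all v ∈ (vᴹ, v̄) the condition v·f(v)/(1 − F(v)) + v·G'(v)/G(v) ≥ 2 holds. Then the posted price p(k) := ϑ(k)·(1 − k/F(ϑ(k))) is non-increasing in k on (0,1); consequently, for every k ∈ (0,1) and every type v > ϑ(k), the consumer surplus U(v,k) = v − p(k) is nondecreasing in k. -/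
open Set MeasureTheory

/-- if `v·f(v)/(1 − F(v)) + v·G'(v)/G(v) ≥ 2` for all `v ∈ (vᴹ, v̄)`,
then the posted price `p(k) = ϑ(k)·(1 − k/F(ϑ(k)))` is non-increasing in `k` on `(0,1)`;
consequently, for every capacity and every type strictly above the cutoff, the consumer
surplus `U(v,k) = v − p(k)` is nondecreasing in `k`. -/
theorem stmt_14
    (vlo vhi : ℝ) (hvlo : 0 ≤ vlo) (hlt : vlo < vhi)
    (F f : ℝ → ℝ) (hFmono : Monotone F)
    (hFlo : F vlo = 0) (hFhi : F vhi = 1)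
    (hFderiv : ∀ v ∈ Set.Icc vlo vhi, HasDerivAt F (f v) v)
    (hfpos : ∀ v ∈ Set.Icc vlo vhi, 0 < f v)
    (hfdiff : DifferentiableOn ℝ f (Set.Icc vlo vhi))
    (hreg : StrictMonoOn (phi F f) (Set.Icc vlo vhi))
    (vM : ℝ) (hvM : IsLeast {v ∈ Set.Icc vlo vhi | 0 ≤ phi F f v} vM)
    (FInv : ℝ → ℝ)
    (hFInv : ∀ k ∈ Set.Ioo (0:ℝ) 1, FInv k ∈ Set.Icc vlo vhi ∧ F (FInv k) = k)
    (θ : ℝ → ℝ)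
    (hθ : ∀ k ∈ Set.Ioo (0:ℝ) 1, θ k ∈ Set.Icc vlo vhi ∧
      k * Gfun F f vhi (θ k) = phi F f (θ k) * (F (θ k)) ^ 2)
    (hθuniq : ∀ k ∈ Set.Ioo (0:ℝ) 1, ∀ v ∈ Set.Icc vlo vhi,
      k * Gfun F f vhi v = phi F f v * (F v) ^ 2 → v = θ k)
    (hθloc : ∀ k ∈ Set.Ioo (0:ℝ) 1, θ k ∈ Set.Ioo (max vM (FInv k)) vhi)
    (hcond : ∀ v ∈ Set.Ioo vM vhi,
      v * f v / (1 - F v) + v * deriv (Gfun F f vhi) v / Gfun F f vhi v ≥ 2) :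
    AntitoneOn (fun k => θ k * (1 - k / F (θ k))) (Set.Ioo (0:ℝ) 1) ∧
      (∀ k' ∈ Set.Ioo (0:ℝ) 1, ∀ k'' ∈ Set.Ioo (0:ℝ) 1, k' ≤ k'' →
        ∀ v : ℝ, θ k' < v → θ k'' < v →
          v - θ k' * (1 - k' / F (θ k')) ≤ v - θ k'' * (1 - k'' / F (θ k''))) := by
  have hvhi : (0:ℝ) < vhi := lt_of_le_of_lt hvlo hlt
  have hFcont : ContinuousOn F (Set.Icc vlo vhi) := fun x hx =>
    (hFderiv x hx).continuousAt.continuousWithinAt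
  have hfcont : ContinuousOn f (Set.Icc vlo vhi) := hfdiff.continuousOn
  have hfne : ∀ x ∈ Set.Icc vlo vhi, f x ≠ 0 := fun x hx => (hfpos x hx).ne'
  have hphicont : ContinuousOn (phi F f) (Set.Icc vlo vhi) := by
    have h : ContinuousOn (fun v => v - (1 - F v) / f v) (Set.Icc vlo vhi) :=
      continuousOn_id.sub ((continuousOn_const.sub hFcont).div hfcont hfne)
    exact h
  have hFsm : StrictMonoOn F (Set.Icc vlo vhi) := by
    apply strictMonoOn_of_deriv_pos (convex_Icc _ _) hFcont
    intro x hx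
    rw [interior_Icc] at hx
    rw [(hFderiv x (Set.Ioo_subset_Icc_self hx)).deriv]
    exact hfpos x (Set.Ioo_subset_Icc_self hx)
  -- key integral identity
  have hint : ∀ v ∈ Set.Icc vlo vhi, (∫ s in v..vhi, phi F f s * f s) = v * (1 - F v) := by
    intro v hv
    have h1 : ∀ s ∈ Set.uIcc v vhi,
        HasDerivAt (fun t => -(t * (1 - F t))) (phi F f s * f s) s := by
      intro s hs
      rw [Set.uIcc_of_le hv.2] at hs
      have hsI : s ∈ Set.Icc vlo vhi := ⟨le_trans hv.1 hs.1, hs.2⟩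
      have hF := hFderiv s hsI
      have h2 : HasDerivAt (fun t => -(t * (1 - F t)))
          (-(1 * (1 - F s) + s * (0 - f s))) s :=
        ((hasDerivAt_id s).mul ((hasDerivAt_const s (1:ℝ)).sub hF)).neg
      convert h2 using 1
      have hf0 := hfne s hsI
      unfold phi
      field_simp
      ring
    have h2 : IntervalIntegrable (fun s => phi F f s * f s) MeasureTheory.volume v vhi := by
      apply ContinuousOn.intervalIntegrable
      apply (hphicont.mul hfcont).mono
      rw [Set.uIcc_of_le hv.2]
      exact Set.Icc_subset_Icc hv.1 le_rfl
    rw [intervalIntegral.integral_eq_sub_of_hasDerivAt h1 h2, hFhi]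
    ring
  -- G identity
  have hGid : Set.EqOn (Gfun F f vhi) (fun v => phi F f v * F v + v * (1 - F v))
      (Set.Icc vlo vhi) := by
    intro v hv
    unfold Gfun
    rw [hint v hv]
  have hGcont : ContinuousOn (Gfun F f vhi) (Set.Icc vlo vhi) :=
    ContinuousOn.congr
      ((hphicont.mul hFcont).add (continuousOn_id.mul (continuousOn_const.sub hFcont))) hGid
  have hvMIcc : vM ∈ Set.Icc vlo vhi := hvM.1.1
  have hvMphi : 0 ≤ phi F f vM := hvM.1.2
  -- facts about θ k
  have hθfacts : ∀ k ∈ Set.Ioo (0:ℝ) 1,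
      vM < θ k ∧ θ k < vhi ∧ θ k ∈ Set.Icc vlo vhi ∧ 0 < θ k ∧
      0 < phi F f (θ k) ∧ k ≤ F (θ k) ∧ F (θ k) < 1 ∧ 0 < Gfun F f vhi (θ k) := by
    intro k hk
    obtain ⟨hθI, hFOC⟩ := hθ k hk
    obtain ⟨hθl, hθr⟩ := hθloc k hk
    have h1 : vM < θ k := lt_of_le_of_lt (le_max_left _ _) hθl
    have h2 : FInv k < θ k := lt_of_le_of_lt (le_max_right _ _) hθl
    have h4 : 0 < θ k := lt_of_le_of_lt (le_trans hvlo hvMIcc.1) h1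
    have h5 : 0 < phi F f (θ k) := lt_of_le_of_lt hvMphi (hreg hvMIcc hθI h1)
    have h6 : k ≤ F (θ k) := by
      have hm := hFmono h2.le
      rw [(hFInv k hk).2] at hm
      exact hm
    have h7 : F (θ k) < 1 := by
      rw [← hFhi]
      exact hFsm hθI (Set.right_mem_Icc.mpr (le_of_lt hlt)) hθr
    have h8 : 0 < Gfun F f vhi (θ k) := by
      have hFpos : 0 < F (θ k) := lt_of_lt_of_le hk.1 h6
      have hh := mul_pos h5 (pow_pos hFpos 2)
      nlinarith [hk.1]
    exact ⟨h1, hθr, hθI, h4, h5, h6, h7, h8⟩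
  -- price formula
  have hp : ∀ k ∈ Set.Ioo (0:ℝ) 1, θ k * (1 - k / F (θ k)) =
      (θ k)^2 * (1 - F (θ k)) / Gfun F f vhi (θ k) := by
    intro k hk
    obtain ⟨h1, h2, h3, h4, h5, h6, h7, h8⟩ := hθfacts k hk
    have hFpos : 0 < F (θ k) := lt_of_lt_of_le hk.1 h6
    have hFOC := (hθ k hk).2
    have hGi := hGid h3
    simp only at hGi
    have hkF : k / F (θ k) = phi F f (θ k) * F (θ k) / Gfun F f vhi (θ k) := by
      rw [div_eq_div_iff hFpos.ne' h8.ne']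
      linear_combination hFOC
    rw [hkF, eq_div_iff h8.ne']
    field_simp
    linear_combination hGi
  -- main monotonicity claim
  have hmain : ∀ k1 ∈ Set.Ioo (0:ℝ) 1, ∀ k2 ∈ Set.Ioo (0:ℝ) 1, k1 ≤ k2 →
      θ k2 * (1 - k2 / F (θ k2)) ≤ θ k1 * (1 - k1 / F (θ k1)) := by
    intro k1 hk1 k2 hk2 hk12
    rcases eq_or_lt_of_le hk12 with rfl | hlt12
    · exact le_refl _
    obtain ⟨a1, a2, a3, a4, a5, a6, a7, a8⟩ := hθfacts k1 hk1
    obtain ⟨b1, b2, b3, b4, b5, b6, b7, b8⟩ := hθfacts k2 hk2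
    -- θ k1 < θ k2 by IVT + uniqueness
    have hθlt : θ k1 < θ k2 := by
      set h : ℝ → ℝ := fun v => k2 * Gfun F f vhi v - phi F f v * (F v)^2 with hh
      have hcont : ContinuousOn h (Set.Icc (θ k1) vhi) := by
        apply ContinuousOn.mono _ (Set.Icc_subset_Icc a3.1 le_rfl)
        exact (continuousOn_const.mul hGcont).sub (hphicont.mul (hFcont.pow 2))
      have hpos : 0 < h (θ k1) := by
        have hFOC := (hθ k1 hk1).2
        simp only [hh]
        nlinarith [mul_pos (sub_pos.mpr hlt12) a8]
      have hneg : h vhi < 0 := by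
        have hphihi : phi F f vhi = vhi := by
          unfold phi
          rw [hFhi]
          simp
        have hGhi : Gfun F f vhi vhi = vhi := by
          have := hGid (Set.right_mem_Icc.mpr hlt.le)
          simp only at this
          rw [this, hFhi, hphihi]
          ring
        simp only [hh, hGhi, hphihi, hFhi]
        nlinarith [hk2.2, hvhi]
      have hmem : (0:ℝ) ∈ Set.Icc (h vhi) (h (θ k1)) := ⟨hneg.le, hpos.le⟩
      obtain ⟨v, hvmem, hv0⟩ := intermediate_value_Icc' a2.le hcont hmem
      have hvI : v ∈ Set.Icc vlo vhi := ⟨le_trans a3.1 hvmem.1, hvmem.2⟩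
      have hveq : v = θ k2 := by
        apply hθuniq k2 hk2 v hvI
        simp only [hh] at hv0
        linarith
      have hvne : v ≠ θ k1 := by
        intro hcontra
        rw [hcontra] at hv0
        exact hpos.ne' hv0
      rw [← hveq]
      exact lt_of_le_of_ne hvmem.1 (Ne.symm hvne)
    -- the auxiliary function H
    set D : ℝ → ℝ := fun v => phi F f v * F v + v * (1 - F v) with hD
    set H : ℝ → ℝ := fun v => v^2 * (1 - F v) / D v with hH
    have hfacts : ∀ x ∈ Set.Icc (θ k1) (θ k2),
        x ∈ Set.Icc vlo vhi ∧ vlo < x ∧ x < vhi ∧ 0 < x ∧ 0 < f x ∧ F x < 1 ∧ 0 < D x := by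
      intro x hx
      have hx1 : vlo < x := lt_of_le_of_lt hvMIcc.1 (lt_of_lt_of_le a1 hx.1)
      have hx2 : x < vhi := lt_of_le_of_lt hx.2 b2
      have hxI : x ∈ Set.Icc vlo vhi := ⟨hx1.le, hx2.le⟩
      have hx4 : 0 < x := lt_of_le_of_lt hvlo hx1
      have hx5 := hfpos x hxI
      have hx6 : F x < 1 := by
        rw [← hFhi]
        exact hFsm hxI (Set.right_mem_Icc.mpr hlt.le) hx2
      have hxvM : vM < x := lt_of_lt_of_le a1 hx.1
      have hphix : 0 < phi F f x := lt_of_le_of_lt hvMphi (hreg hvMIcc hxI hxvM)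
      have hFx : 0 ≤ F x := by
        rw [← hFlo]
        exact hFmono hx1.le
      have hx7 : 0 < D x := by
        simp only [hD]
        nlinarith [mul_pos hx4 (by linarith : (0:ℝ) < 1 - F x), mul_nonneg hphix.le hFx]
      exact ⟨hxI, hx1, hx2, hx4, hx5, hx6, hx7⟩
    have hdiffD : ∀ x ∈ Set.Icc (θ k1) (θ k2), DifferentiableAt ℝ D x := by
      intro x hx
      obtain ⟨hxI, hx1, hx2, hx4, hx5, hx6, hx7⟩ := hfacts x hx
      have hFd : DifferentiableAt ℝ F x := (hFderiv x hxI).differentiableAt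
      have hfd : DifferentiableAt ℝ f x :=
        (hfdiff x hxI).differentiableAt (Icc_mem_nhds hx1 hx2)
      have hphid : DifferentiableAt ℝ (phi F f) x := by
        have h : DifferentiableAt ℝ (fun v => v - (1 - F v) / f v) x :=
          differentiableAt_id.sub (((differentiableAt_const _).sub hFd).div hfd hx5.ne')
        exact h
      exact (hphid.mul hFd).add (differentiableAt_id.mul ((differentiableAt_const _).sub hFd))
    have hdiffH : ∀ x ∈ Set.Icc (θ k1) (θ k2), DifferentiableAt ℝ H x := by
      intro x hx
      obtain ⟨hxI, hx1, hx2, hx4, hx5, hx6, hx7⟩ := hfacts x hx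
      exact ((differentiableAt_pow 2).mul
        ((differentiableAt_const _).sub (hFderiv x hxI).differentiableAt)).div
        (hdiffD x hx) hx7.ne'
    have hderivH : ∀ x ∈ Set.Ioo (θ k1) (θ k2), deriv H x ≤ 0 := by
      intro x hx
      have hx' : x ∈ Set.Icc (θ k1) (θ k2) := Set.Ioo_subset_Icc_self hx
      obtain ⟨hxI, hx1, hx2, hx4, hx5, hx6, hx7⟩ := hfacts x hx'
      have hxvM : vM < x := lt_of_lt_of_le a1 hx'.1
      set d := deriv D x with hd
      have hDd : HasDerivAt D d x := (hdiffD x hx').hasDerivAt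
      have hFd := hFderiv x hxI
      have hNd : HasDerivAt (fun v => v^2 * (1 - F v))
          (((2:ℕ) * x ^ (2-1)) * (1 - F x) + x^2 * (0 - f x)) x :=
        (hasDerivAt_pow 2 x).mul ((hasDerivAt_const x (1:ℝ)).sub hFd)
      have hHd : HasDerivAt H (((((2:ℕ) * x ^ (2-1)) * (1 - F x) + x^2 * (0 - f x)) * D x
          - x^2 * (1 - F x) * d) / (D x)^2) x := hNd.div hDd hx7.ne'
      rw [hHd.deriv]
      apply div_nonpos_of_nonpos_of_nonneg _ (sq_nonneg _)
      have hDx : D x = phi F f x * F x + x * (1 - F x) := rfl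
      have hGeq : deriv (Gfun F f vhi) x = d := by
        apply Filter.EventuallyEq.deriv_eq
        exact Filter.eventuallyEq_of_mem (Icc_mem_nhds hx1 hx2) hGid
      have hc := hcond x ⟨hxvM, hx2⟩
      rw [hGeq] at hc
      rw [hGid hxI] at hc
      have ha0 : (0:ℝ) < 1 - F x := by linarith
      rw [ge_iff_le, div_add_div _ _ ha0.ne' hx7.ne',
        le_div_iff₀ (mul_pos ha0 hx7)] at hc
      have key : (((2:ℕ) * x ^ (2-1)) * (1 - F x) + x^2 * (0 - f x)) * D x
          - x^2 * (1 - F x) * d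
          = x * (2 * ((1 - F x) * D x) - (x * f x * D x + x * d * (1 - F x))) := by
        push_cast
        ring
      rw [key]
      exact mul_nonpos_of_nonneg_of_nonpos hx4.le (by linarith)
    have hanti : AntitoneOn H (Set.Icc (θ k1) (θ k2)) := by
      apply antitoneOn_of_deriv_nonpos (convex_Icc _ _)
      · exact fun x hx => (hdiffH x hx).continuousAt.continuousWithinAt
      · rw [interior_Icc]
        exact fun x hx => (hdiffH x (Set.Ioo_subset_Icc_self hx)).differentiableWithinAt
      · rw [interior_Icc]
        exact hderivH
    have hHle := hanti (Set.left_mem_Icc.mpr hθlt.le) (Set.right_mem_Icc.mpr hθlt.le) hθlt.le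
    rw [hp k1 hk1, hp k2 hk2]
    have e1 : (θ k1)^2 * (1 - F (θ k1)) / Gfun F f vhi (θ k1) = H (θ k1) := by
      rw [hGid a3]
    have e2 : (θ k2)^2 * (1 - F (θ k2)) / Gfun F f vhi (θ k2) = H (θ k2) := by
      rw [hGid b3]
    rw [e1, e2]
    exact hHle
  constructor
  · intro k1 hk1 k2 hk2 h12
    exact hmain k1 hk1 k2 hk2 h12
  · intro k' hk' k'' hk'' h12 v _ _
    have := hmain k' hk' k'' hk'' h12
    linarith
end

section
/- The cutoff map k ↦ ϑ(k) is differentiable on (0,1), hence so is the posted price p(k) := ϑ(k)·(1 − k/F(ϑ(k))); and for every k ∈ (0,1), p'(k) ≤ 0 holds if and only if ϑ(k)·f(ϑ(k))/(1 − F(ϑ(k))) + ϑ(k)·G'(ϑ(k))/G(ϑ(k)) ≥ 2. -/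
open Set MeasureTheory

private lemma stmt16_aux (v a b P D Gv k : ℝ) (hv : 0 < v) (ha : 0 < a) (ha1 : a < 1)
    (hb : 0 < b) (hP : 0 < P) (hG : 0 < Gv) (hD : 0 ≤ D)
    (hGI : Gv - P * a = v * (1 - a)) (hPb : P * b = v * b - (1 - a))
    (hk : k = P * a ^ 2 / Gv) :
    ((D * a ^ 2 * (Gv - P * a) + 2 * (P * b) * a * Gv) / Gv ^ 2)⁻¹ * (1 - k / a) +
        v * (0 - (1 * a - k * (b * ((D * a ^ 2 * (Gv - P * a) +
          2 * (P * b) * a * Gv) / Gv ^ 2)⁻¹)) / a ^ 2) ≤ 0 ↔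
      v * b / (1 - a) + v * (D * a) / Gv ≥ 2 := by
  have h1a : (0:ℝ) < 1 - a := sub_pos.2 ha1
  have hN : 0 < D * a ^ 2 * (Gv - P * a) + 2 * (P * b) * a * Gv := by
    have h1 : 0 ≤ D * a ^ 2 * (Gv - P * a) := by
      apply mul_nonneg (mul_nonneg hD (sq_nonneg _))
      rw [hGI]
      exact le_of_lt (mul_pos hv h1a)
    have h2 : 0 < 2 * (P * b) * a * Gv := by positivity
    linarith
  subst hk
  have hE : ((D * a ^ 2 * (Gv - P * a) + 2 * (P * b) * a * Gv) / Gv ^ 2)⁻¹ *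
        (1 - P * a ^ 2 / Gv / a) +
        v * (0 - (1 * a - P * a ^ 2 / Gv * (b * ((D * a ^ 2 * (Gv - P * a) +
          2 * (P * b) * a * Gv) / Gv ^ 2)⁻¹)) / a ^ 2) =
      (a * Gv * ((Gv - P * a) + v * (P * b)) -
        v * (D * a ^ 2 * (Gv - P * a) + 2 * (P * b) * a * Gv)) /
      (a * (D * a ^ 2 * (Gv - P * a) + 2 * (P * b) * a * Gv)) := by
    have hN' : D * a ^ 2 * (Gv - P * a) + 2 * (P * b) * a * Gv ≠ 0 := hN.ne'
    rw [inv_div]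
    generalize D * a ^ 2 * (Gv - P * a) + 2 * (P * b) * a * Gv = N at hN' ⊢
    field_simp
    ring
  rw [hE, div_le_iff₀ (mul_pos ha hN), zero_mul, ge_iff_le,
    div_add_div _ _ (ne_of_gt h1a) (ne_of_gt hG), le_div_iff₀ (mul_pos h1a hG)]
  rw [hGI, hPb]
  constructor
  · intro h
    nlinarith [mul_pos ha hv, h]
  · intro h
    nlinarith [mul_nonneg (mul_pos ha hv).le (sub_nonneg.2 h)]

/-- the cutoff map `k ↦ ϑ(k)` is differentiable on `(0,1)`, hence so is
the posted price `p(k) = ϑ(k)·(1 − k/F(ϑ(k)))`; and for every `k ∈ (0,1)`, `p'(k) ≤ 0`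
holds iff `ϑ(k)·f(ϑ(k))/(1 − F(ϑ(k))) + ϑ(k)·G'(ϑ(k))/G(ϑ(k)) ≥ 2`. -/
theorem stmt_16
    (vlo vhi : ℝ) (hvlo : 0 ≤ vlo) (hlt : vlo < vhi)
    (F f : ℝ → ℝ) (hFmono : Monotone F)
    (hFlo : F vlo = 0) (hFhi : F vhi = 1)
    (hFderiv : ∀ v ∈ Set.Icc vlo vhi, HasDerivAt F (f v) v)
    (hfpos : ∀ v ∈ Set.Icc vlo vhi, 0 < f v)
    (hfdiff : DifferentiableOn ℝ f (Set.Icc vlo vhi))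
    (hreg : StrictMonoOn (phi F f) (Set.Icc vlo vhi))
    (vM : ℝ) (hvM : IsLeast {v ∈ Set.Icc vlo vhi | 0 ≤ phi F f v} vM)
    (FInv : ℝ → ℝ)
    (hFInv : ∀ k ∈ Set.Ioo (0:ℝ) 1, FInv k ∈ Set.Icc vlo vhi ∧ F (FInv k) = k)
    (θ : ℝ → ℝ)
    (hθ : ∀ k ∈ Set.Ioo (0:ℝ) 1, θ k ∈ Set.Icc vlo vhi ∧
      k * Gfun F f vhi (θ k) = phi F f (θ k) * (F (θ k)) ^ 2)
    (hθuniq : ∀ k ∈ Set.Ioo (0:ℝ) 1, ∀ v ∈ Set.Icc vlo vhi,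
      k * Gfun F f vhi v = phi F f v * (F v) ^ 2 → v = θ k)
    (hθloc : ∀ k ∈ Set.Ioo (0:ℝ) 1, θ k ∈ Set.Ioo (max vM (FInv k)) vhi)
    :
    (∀ k ∈ Set.Ioo (0:ℝ) 1, DifferentiableAt ℝ θ k) ∧
      (∀ k ∈ Set.Ioo (0:ℝ) 1,
        DifferentiableAt ℝ (fun k' => θ k' * (1 - k' / F (θ k'))) k) ∧
      (∀ k ∈ Set.Ioo (0:ℝ) 1,
        deriv (fun k' => θ k' * (1 - k' / F (θ k'))) k ≤ 0 ↔
          θ k * f (θ k) / (1 - F (θ k)) +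
            θ k * deriv (Gfun F f vhi) (θ k) / Gfun F f vhi (θ k) ≥ 2) := by
  have hvloM : vlo ≤ vM := hvM.1.1.1
  have hvM_Icc : vM ∈ Set.Icc vlo vhi := hvM.1.1
  have hΦvM : 0 ≤ phi F f vM := hvM.1.2
  have hFc : ContinuousOn F (Set.Icc vlo vhi) :=
    fun v hv => ((hFderiv v hv).continuousAt).continuousWithinAt
  have hfne : ∀ v ∈ Set.Icc vlo vhi, f v ≠ 0 := fun v hv => ne_of_gt (hfpos v hv)
  have hfc : ContinuousOn f (Set.Icc vlo vhi) := hfdiff.continuousOn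
  have hΦc : ContinuousOn (phi F f) (Set.Icc vlo vhi) := by
    apply ContinuousOn.sub continuousOn_id
    exact (continuousOn_const.sub hFc).div hfc hfne
  have hFsm : StrictMonoOn F (Set.Icc vlo vhi) := by
    apply strictMonoOn_of_deriv_pos (convex_Icc _ _) hFc
    intro x hx
    rw [interior_Icc] at hx
    rw [(hFderiv x (Ioo_subset_Icc_self hx)).deriv]
    exact hfpos x (Ioo_subset_Icc_self hx)
  -- the closed form for the integral
  have hint : ∀ v ∈ Set.Icc vlo vhi, (∫ s in v..vhi, phi F f s * f s) = v * (1 - F v) := by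
    intro v hv
    have huIcc : uIcc v vhi = Set.Icc v vhi := uIcc_of_le hv.2
    have hsub : Set.Icc v vhi ⊆ Set.Icc vlo vhi := Set.Icc_subset_Icc hv.1 le_rfl
    have hderivH : ∀ s ∈ uIcc v vhi,
        HasDerivAt (fun t => -(t * (1 - F t))) (phi F f s * f s) s := by
      intro s hs
      rw [huIcc] at hs
      have hs' := hsub hs
      have h1 : HasDerivAt (fun t => t * (1 - F t))
          (1 * (1 - F s) + s * (0 - f s)) s :=
        (hasDerivAt_id s).mul ((hasDerivAt_const s 1).sub (hFderiv s hs'))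
      have h2 : HasDerivAt (fun t => -(t * (1 - F t))) (-(1 * (1 - F s) + s * (0 - f s))) s :=
        h1.neg
      convert h2 using 1
      have hΦf : phi F f s * f s = s * f s - (1 - F s) := by
        show (s - (1 - F s) / f s) * f s = _
        rw [sub_mul, div_mul_cancel₀ _ (hfne s hs')]
      rw [hΦf]; ring
    have hintg : IntervalIntegrable (fun s => phi F f s * f s) volume v vhi := by
      apply ContinuousOn.intervalIntegrable
      rw [huIcc]
      exact (hΦc.mono hsub).mul (hfc.mono hsub)
    rw [intervalIntegral.integral_eq_sub_of_hasDerivAt hderivH hintg, hFhi]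
    ring
  have hGval : ∀ v ∈ Set.Icc vlo vhi,
      Gfun F f vhi v = phi F f v * F v + v * (1 - F v) := by
    intro v hv
    unfold Gfun
    rw [hint v hv]
  -- phi is differentiable at interior points
  have hΦd : ∀ v ∈ Set.Ioo vlo vhi, HasDerivAt (phi F f) (deriv (phi F f) v) v := by
    intro v hv
    have hv' := Ioo_subset_Icc_self hv
    have hnhds : Set.Icc vlo vhi ∈ nhds v := Icc_mem_nhds hv.1 hv.2
    have hFd : DifferentiableAt ℝ F v := (hFderiv v hv').differentiableAt
    have hfd : DifferentiableAt ℝ f v := (hfdiff v hv').differentiableAt hnhds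
    have : DifferentiableAt ℝ (phi F f) v := by
      apply DifferentiableAt.sub differentiableAt_fun_id
      exact ((differentiableAt_const (1:ℝ)).sub hFd).div hfd (hfne v hv')
    exact this.hasDerivAt
  -- deriv of phi is nonnegative at interior points
  have hDnn : ∀ v ∈ Set.Ioo vlo vhi, 0 ≤ deriv (phi F f) v := by
    intro v hv
    have h := hΦd v hv
    have hslope : Filter.Tendsto (slope (phi F f) v) (nhdsWithin v (Set.Ioi v))
        (nhds (deriv (phi F f) v)) := by
      apply (hasDerivAt_iff_tendsto_slope.mp h).mono_left
      apply nhdsWithin_mono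
      intro y hy
      exact ne_of_gt hy
    apply ge_of_tendsto hslope
    filter_upwards [Ioo_mem_nhdsGT_of_mem (Set.mem_Ico.2 ⟨le_rfl, hv.2⟩)] with y hy
    have hyIcc : y ∈ Set.Icc vlo vhi := ⟨le_of_lt (lt_trans hv.1 hy.1), hy.2.le⟩
    have hΦlt : phi F f v < phi F f y := hreg (Ioo_subset_Icc_self hv) hyIcc hy.1
    rw [slope_def_field]
    exact div_nonneg (sub_nonneg.2 hΦlt.le) (sub_nonneg.2 hy.1.le)
  -- derivative of G at interior points
  have hGd : ∀ v ∈ Set.Ioo vlo vhi,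
      HasDerivAt (Gfun F f vhi) (deriv (phi F f) v * F v) v := by
    intro v hv
    have hv' := Ioo_subset_Icc_self hv
    have heq : Gfun F f vhi =ᶠ[nhds v] fun w => phi F f w * F w + w * (1 - F w) := by
      filter_upwards [Ioo_mem_nhds hv.1 hv.2] with w hw
      exact hGval w (Ioo_subset_Icc_self hw)
    have h1 : HasDerivAt (fun w => phi F f w * F w + w * (1 - F w))
        ((deriv (phi F f) v * F v + phi F f v * f v) +
          (1 * (1 - F v) + v * (0 - f v))) v :=
      ((hΦd v hv).mul (hFderiv v hv')).add
        ((hasDerivAt_id v).mul ((hasDerivAt_const v 1).sub (hFderiv v hv')))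
    have hval : (deriv (phi F f) v * F v + phi F f v * f v) +
        (1 * (1 - F v) + v * (0 - f v)) = deriv (phi F f) v * F v := by
      have hΦf : phi F f v * f v = v * f v - (1 - F v) := by
        show (v - (1 - F v) / f v) * f v = _
        rw [sub_mul, div_mul_cancel₀ _ (hfne v hv')]
      rw [hΦf]; ring
    rw [hval] at h1
    exact h1.congr_of_eventuallyEq heq
  -- pointwise positivity facts on (vM, vhi)
  have hfacts : ∀ v ∈ Set.Ioo vM vhi, 0 < v ∧ 0 < F v ∧ F v < 1 ∧
      0 < phi F f v ∧ 0 < f v ∧ 0 < Gfun F f vhi v := by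
    intro v hv
    have hv1 : v ∈ Set.Ioo vlo vhi := ⟨lt_of_le_of_lt hvloM hv.1, hv.2⟩
    have hv' := Ioo_subset_Icc_self hv1
    have hvpos : 0 < v := lt_of_le_of_lt hvlo hv1.1
    have hF0 : 0 < F v := by
      rw [← hFlo]
      exact hFsm (Set.left_mem_Icc.2 hlt.le) hv' hv1.1
    have hF1 : F v < 1 := by
      rw [← hFhi]
      exact hFsm hv' (Set.right_mem_Icc.2 hlt.le) hv1.2
    have hP : 0 < phi F f v := lt_of_le_of_lt hΦvM (hreg hvM_Icc hv' hv.1)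
    have hG : 0 < Gfun F f vhi v := by
      rw [hGval v hv']
      have h1 := mul_pos hP hF0
      have h2 := mul_pos hvpos (sub_pos.2 hF1)
      linarith
    exact ⟨hvpos, hF0, hF1, hP, hfpos v hv', hG⟩
  -- the map κ and its derivative
  have hκd : ∀ v ∈ Set.Ioo vM vhi,
      HasDerivAt (fun w => phi F f w * (F w) ^ 2 / Gfun F f vhi w)
        ((deriv (phi F f) v * (F v) ^ 2 * (Gfun F f vhi v - phi F f v * F v) +
          2 * phi F f v * F v * f v * Gfun F f vhi v) / (Gfun F f vhi v) ^ 2) v := by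
    intro v hv
    obtain ⟨hvpos, hF0, hF1, hP, hfv, hG⟩ := hfacts v hv
    have hv1 : v ∈ Set.Ioo vlo vhi := ⟨lt_of_le_of_lt hvloM hv.1, hv.2⟩
    have hv' := Ioo_subset_Icc_self hv1
    have hnum : HasDerivAt (fun w => phi F f w * (F w) ^ 2)
        (deriv (phi F f) v * (F v) ^ 2 + phi F f v * (↑2 * F v ^ 1 * f v)) v :=
      (hΦd v hv1).mul ((hFderiv v hv').pow 2)
    have hdiv := hnum.div (hGd v hv1) (ne_of_gt hG)
    exact hdiv.congr_deriv (by ring)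
  have hNpos : ∀ v ∈ Set.Ioo vM vhi,
      0 < deriv (phi F f) v * (F v) ^ 2 * (Gfun F f vhi v - phi F f v * F v) +
        2 * phi F f v * F v * f v * Gfun F f vhi v := by
    intro v hv
    obtain ⟨hvpos, hF0, hF1, hP, hfv, hG⟩ := hfacts v hv
    have hv1 : v ∈ Set.Ioo vlo vhi := ⟨lt_of_le_of_lt hvloM hv.1, hv.2⟩
    have hv' := Ioo_subset_Icc_self hv1
    have hI : Gfun F f vhi v - phi F f v * F v = v * (1 - F v) := by
      rw [hGval v hv']; ring
    rw [hI]
    have h1 : 0 ≤ deriv (phi F f) v * (F v) ^ 2 * (v * (1 - F v)) := by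
      apply mul_nonneg (mul_nonneg (hDnn v hv1) (sq_nonneg _))
      exact le_of_lt (mul_pos hvpos (sub_pos.2 hF1))
    have h2 : 0 < 2 * phi F f v * F v * f v * Gfun F f vhi v := by positivity
    linarith
  -- κ is strictly monotone on (vM, vhi)
  have hκmono : StrictMonoOn (fun w => phi F f w * (F w) ^ 2 / Gfun F f vhi w)
      (Set.Ioo vM vhi) := by
    apply strictMonoOn_of_deriv_pos (convex_Ioo _ _)
    · intro v hv
      exact (hκd v hv).differentiableAt.continuousAt.continuousWithinAt
    · intro v hv
      rw [interior_Ioo] at hv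
      rw [(hκd v hv).deriv]
      exact div_pos (hNpos v hv) (pow_pos (hfacts v hv).2.2.2.2.2 2)
  have hθS : ∀ k ∈ Set.Ioo (0:ℝ) 1, θ k ∈ Set.Ioo vM vhi := by
    intro k hk
    have h := hθloc k hk
    exact ⟨lt_of_le_of_lt (le_max_left _ _) h.1, h.2⟩
  have hκθ : ∀ k ∈ Set.Ioo (0:ℝ) 1,
      phi F f (θ k) * (F (θ k)) ^ 2 / Gfun F f vhi (θ k) = k := by
    intro k hk
    have hG := (hfacts _ (hθS k hk)).2.2.2.2.2
    rw [← (hθ k hk).2, mul_div_assoc, div_self (ne_of_gt hG), mul_one]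
  -- continuity of θ
  have hθcont : ∀ k ∈ Set.Ioo (0:ℝ) 1, ContinuousAt θ k := by
    intro k hk
    have hθkS := hθS k hk
    refine tendsto_order.2 ⟨?_, ?_⟩
    · intro l hl
      obtain ⟨w, hw⟩ := exists_between (show max l vM < θ k from max_lt hl hθkS.1)
      have hwS : w ∈ Set.Ioo vM vhi :=
        ⟨lt_of_le_of_lt (le_max_right l vM) hw.1, lt_trans hw.2 hθkS.2⟩
      have hκw : phi F f w * (F w) ^ 2 / Gfun F f vhi w < k := by
        rw [← hκθ k hk]
        exact hκmono hwS hθkS hw.2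
      filter_upwards [Ioo_mem_nhds hκw hk.2, Ioo_mem_nhds hk.1 hk.2] with k' hk1 hk2
      have hθk'S := hθS k' hk2
      by_contra hcon
      push_neg at hcon
      have hle : θ k' ≤ w := le_trans hcon (le_trans (le_max_left l vM) hw.1.le)
      have := (hκmono.le_iff_le hθk'S hwS).2 hle
      rw [hκθ k' hk2] at this
      exact absurd hk1.1 (not_lt.2 this)
    · intro u hu
      obtain ⟨w, hw⟩ := exists_between (show θ k < min u vhi from lt_min hu hθkS.2)
      have hwS : w ∈ Set.Ioo vM vhi :=
        ⟨lt_trans hθkS.1 hw.1, lt_of_lt_of_le hw.2 (min_le_right u vhi)⟩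
      have hκw : k < phi F f w * (F w) ^ 2 / Gfun F f vhi w := by
        rw [← hκθ k hk]
        exact hκmono hθkS hwS hw.1
      filter_upwards [Ioo_mem_nhds hk.1 hκw, Ioo_mem_nhds hk.1 hk.2] with k' hk1 hk2
      have hθk'S := hθS k' hk2
      by_contra hcon
      push_neg at hcon
      have hle : w ≤ θ k' := le_trans (le_trans hw.2.le (min_le_left u vhi)) hcon
      have := (hκmono.le_iff_le hwS hθk'S).2 hle
      rw [hκθ k' hk2] at this
      exact absurd hk1.2 (not_lt.2 this)
  -- differentiability of θ
  have hθd : ∀ k ∈ Set.Ioo (0:ℝ) 1,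
      HasDerivAt θ
        (((deriv (phi F f) (θ k) * (F (θ k)) ^ 2 *
            (Gfun F f vhi (θ k) - phi F f (θ k) * F (θ k)) +
          2 * phi F f (θ k) * F (θ k) * f (θ k) * Gfun F f vhi (θ k)) /
            (Gfun F f vhi (θ k)) ^ 2)⁻¹) k := by
    intro k hk
    have hG := (hfacts _ (hθS k hk)).2.2.2.2.2
    apply HasDerivAt.of_local_left_inverse (hθcont k hk) (hκd (θ k) (hθS k hk))
      (ne_of_gt (div_pos (hNpos _ (hθS k hk)) (pow_pos hG 2)))
    filter_upwards [isOpen_Ioo.mem_nhds hk] with k' hk' using hκθ k' hk'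
  -- derivative of the posted-price map
  have hpd : ∀ k ∈ Set.Ioo (0:ℝ) 1,
      HasDerivAt (fun k' => θ k' * (1 - k' / F (θ k')))
        (((deriv (phi F f) (θ k) * F (θ k) ^ 2 *
            (Gfun F f vhi (θ k) - phi F f (θ k) * F (θ k)) +
            2 * (phi F f (θ k) * f (θ k)) * F (θ k) * Gfun F f vhi (θ k)) /
              Gfun F f vhi (θ k) ^ 2)⁻¹ * (1 - k / F (θ k)) +
          θ k * (0 - (1 * F (θ k) - k * (f (θ k) *
            ((deriv (phi F f) (θ k) * F (θ k) ^ 2 *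
              (Gfun F f vhi (θ k) - phi F f (θ k) * F (θ k)) +
              2 * (phi F f (θ k) * f (θ k)) * F (θ k) * Gfun F f vhi (θ k)) /
                Gfun F f vhi (θ k) ^ 2)⁻¹)) / F (θ k) ^ 2)) k := by
    intro k hk
    have hθkS := hθS k hk
    have hv1 : θ k ∈ Set.Ioo vlo vhi := ⟨lt_of_le_of_lt hvloM hθkS.1, hθkS.2⟩
    have hv' := Ioo_subset_Icc_self hv1
    obtain ⟨hv0, hF0, hF1, hP, hb, hG⟩ := hfacts _ hθkS
    have hθd' : HasDerivAt θ
        (((deriv (phi F f) (θ k) * F (θ k) ^ 2 *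
            (Gfun F f vhi (θ k) - phi F f (θ k) * F (θ k)) +
            2 * (phi F f (θ k) * f (θ k)) * F (θ k) * Gfun F f vhi (θ k)) /
              Gfun F f vhi (θ k) ^ 2)⁻¹) k := by
      convert hθd k hk using 3
      ring
    have hFθd : HasDerivAt (fun k' => F (θ k'))
        (f (θ k) * ((deriv (phi F f) (θ k) * F (θ k) ^ 2 *
            (Gfun F f vhi (θ k) - phi F f (θ k) * F (θ k)) +
            2 * (phi F f (θ k) * f (θ k)) * F (θ k) * Gfun F f vhi (θ k)) /
              Gfun F f vhi (θ k) ^ 2)⁻¹) k :=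
      (hFderiv (θ k) hv').comp k hθd'
    have hq : HasDerivAt (fun k' => 1 - k' / F (θ k'))
        (0 - (1 * F (θ k) - k * (f (θ k) * ((deriv (phi F f) (θ k) * F (θ k) ^ 2 *
            (Gfun F f vhi (θ k) - phi F f (θ k) * F (θ k)) +
            2 * (phi F f (θ k) * f (θ k)) * F (θ k) * Gfun F f vhi (θ k)) /
              Gfun F f vhi (θ k) ^ 2)⁻¹)) / F (θ k) ^ 2) k :=
      (hasDerivAt_const k (1:ℝ)).sub ((hasDerivAt_id k).div hFθd (ne_of_gt hF0))
    exact hθd'.mul hq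
  refine ⟨fun k hk => (hθd k hk).differentiableAt,
    fun k hk => (hpd k hk).differentiableAt, ?_⟩
  intro k hk
  have hθkS := hθS k hk
  have hv1 : θ k ∈ Set.Ioo vlo vhi := ⟨lt_of_le_of_lt hvloM hθkS.1, hθkS.2⟩
  have hv' := Ioo_subset_Icc_self hv1
  obtain ⟨hv0, hF0, hF1, hP, hb, hG⟩ := hfacts _ hθkS
  rw [(hpd k hk).deriv, (hGd (θ k) hv1).deriv]
  have hGI : Gfun F f vhi (θ k) - phi F f (θ k) * F (θ k) = θ k * (1 - F (θ k)) := by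
    rw [hGval _ hv']; ring
  have hPb : phi F f (θ k) * f (θ k) = θ k * f (θ k) - (1 - F (θ k)) := by
    show (θ k - (1 - F (θ k)) / f (θ k)) * f (θ k) = _
    rw [sub_mul, div_mul_cancel₀ _ (hfne _ hv')]
  have hkeq : k = phi F f (θ k) * F (θ k) ^ 2 / Gfun F f vhi (θ k) := by
    rw [eq_div_iff (ne_of_gt hG)]
    exact (hθ k hk).2
  exact stmt16_aux (θ k) (F (θ k)) (f (θ k)) (phi F f (θ k)) (deriv (phi F f) (θ k))
    (Gfun F f vhi (θ k)) k hv0 hF0 hF1 hb hP hG (hDnn _ hv1) hGI hPb hkeq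
end

section
/- Suppose vᴹ = v̲ and the hazard rate f(v)/(1 − F(v)) is nondecreasing on [v̲, v̄). Then the posted price p(k) := ϑ(k)·(1 − k/F(ϑ(k))) is non-increasing in k on (0,1) if and only if f(v̲)·v̲ ≥ 2. -/
open Set MeasureTheory Topology Filter

/-- Closed form of `G`. -/
noncomputable def gg (F f : ℝ → ℝ) (v : ℝ) : ℝ := v - F v * (1 - F v) / f v

/-- The price as a function of the threshold. -/
noncomputable def Hh (F f : ℝ → ℝ) (v : ℝ) : ℝ := v ^ 2 * (1 - F v) / gg F f v

/-- suppose `vᴹ = v̲` and the hazard rate `f/(1 − F)` is nondecreasing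
on `[v̲, v̄)`. Then the posted price `p(k) = ϑ(k)·(1 − k/F(ϑ(k)))` is non-increasing
in `k` on `(0,1)` iff `f(v̲)·v̲ ≥ 2`. -/
theorem stmt_17
    (vlo vhi : ℝ) (hvlo : 0 ≤ vlo) (hlt : vlo < vhi)
    (F f : ℝ → ℝ) (hFmono : Monotone F)
    (hFlo : F vlo = 0) (hFhi : F vhi = 1)
    (hFderiv : ∀ v ∈ Set.Icc vlo vhi, HasDerivAt F (f v) v)
    (hfpos : ∀ v ∈ Set.Icc vlo vhi, 0 < f v)
    (hfdiff : DifferentiableOn ℝ f (Set.Icc vlo vhi))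
    (hreg : StrictMonoOn (phi F f) (Set.Icc vlo vhi))
    (vM : ℝ) (hvM : IsLeast {v ∈ Set.Icc vlo vhi | 0 ≤ phi F f v} vM)
    (FInv : ℝ → ℝ)
    (hFInv : ∀ k ∈ Set.Ioo (0:ℝ) 1, FInv k ∈ Set.Icc vlo vhi ∧ F (FInv k) = k)
    (θ : ℝ → ℝ)
    (hθ : ∀ k ∈ Set.Ioo (0:ℝ) 1, θ k ∈ Set.Icc vlo vhi ∧
      k * Gfun F f vhi (θ k) = phi F f (θ k) * (F (θ k)) ^ 2)
    (hθuniq : ∀ k ∈ Set.Ioo (0:ℝ) 1, ∀ v ∈ Set.Icc vlo vhi,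
      k * Gfun F f vhi v = phi F f v * (F v) ^ 2 → v = θ k)
    (hθloc : ∀ k ∈ Set.Ioo (0:ℝ) 1, θ k ∈ Set.Ioo (max vM (FInv k)) vhi)
    (hvMlo : vM = vlo)
    (hhazard : MonotoneOn (fun v => f v / (1 - F v)) (Set.Ico vlo vhi)) :
    AntitoneOn (fun k => θ k * (1 - k / F (θ k))) (Set.Ioo (0:ℝ) 1) ↔
      f vlo * vlo ≥ 2 := by
  have hIlo : vlo ∈ Icc vlo vhi := ⟨le_refl _, hlt.le⟩
  have hIhi : vhi ∈ Icc vlo vhi := ⟨hlt.le, le_refl _⟩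
  have hflo : 0 < f vlo := hfpos vlo hIlo
  have hphi0 : 0 ≤ phi F f vlo := by
    have h1 := hvM.1
    rw [hvMlo] at h1
    exact h1.2
  have hvlo0 : 0 < vlo := by
    have : phi F f vlo = vlo - 1 / f vlo := by simp [phi, hFlo]
    nlinarith [hphi0, one_div_pos.mpr hflo, this]
  -- continuity basics
  have hFc : ContinuousOn F (Icc vlo vhi) :=
    fun v hv => (hFderiv v hv).continuousAt.continuousWithinAt
  have hfc : ContinuousOn f (Icc vlo vhi) := hfdiff.continuousOn
  have hFsm : StrictMonoOn F (Icc vlo vhi) := by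
    apply strictMonoOn_of_deriv_pos (convex_Icc vlo vhi) hFc
    intro x hx
    rw [interior_Icc] at hx
    rw [(hFderiv x (Ioo_subset_Icc_self hx)).deriv]
    exact hfpos x (Ioo_subset_Icc_self hx)
  have hF0 : ∀ v ∈ Icc vlo vhi, 0 ≤ F v := fun v hv => hFlo ▸ hFmono hv.1
  have hF1 : ∀ v ∈ Icc vlo vhi, F v ≤ 1 := fun v hv => hFhi ▸ hFmono hv.2
  have hFlt1 : ∀ v ∈ Ico vlo vhi, F v < 1 := fun v hv =>
    hFhi ▸ hFsm ⟨hv.1, hv.2.le⟩ hIhi hv.2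
  have hFposv : ∀ v ∈ Ioc vlo vhi, 0 < F v := fun v hv =>
    hFlo ▸ hFsm hIlo ⟨hv.1.le, hv.2⟩ hv.1
  have hphic : ContinuousOn (phi F f) (Icc vlo vhi) := by
    apply ContinuousOn.sub continuousOn_id
    exact (continuousOn_const.sub hFc).div hfc (fun v hv => (hfpos v hv).ne')
  have hggc : ContinuousOn (gg F f) (Icc vlo vhi) := by
    apply ContinuousOn.sub continuousOn_id
    exact ((hFc.mul (continuousOn_const.sub hFc)).div hfc (fun v hv => (hfpos v hv).ne'))
  -- value of the integral in Gfun
  have hint : ∀ v ∈ Icc vlo vhi, (∫ s in v..vhi, phi F f s * f s) = v * (1 - F v) := by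
    intro v hv
    have huIcc : uIcc v vhi ⊆ Icc vlo vhi := by
      rw [uIcc_of_le hv.2]; exact Icc_subset_Icc hv.1 le_rfl
    have hderiv : ∀ s ∈ uIcc v vhi,
        HasDerivAt (fun s => s * (F s - 1)) (phi F f s * f s) s := by
      intro s hs
      have hs' := huIcc hs
      have h1 : HasDerivAt (fun s => s * (F s - 1)) (1 * (F s - 1) + s * f s) s :=
        (hasDerivAt_id s).mul ((hFderiv s hs').sub_const 1)
      convert h1 using 1
      have hfs := (hfpos s hs').ne'
      rw [phi]; field_simp; ring
    have hii : IntervalIntegrable (fun s => phi F f s * f s) volume v vhi :=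
      ((hphic.mono huIcc).mul (hfc.mono huIcc)).intervalIntegrable
    rw [intervalIntegral.integral_eq_sub_of_hasDerivAt hderiv hii, hFhi]
    ring
  have hGval : ∀ v ∈ Icc vlo vhi, Gfun F f vhi v = gg F f v := by
    intro v hv
    have hfv := (hfpos v hv).ne'
    rw [Gfun, hint v hv, phi, gg]
    field_simp
    ring
  have hGalt : ∀ v ∈ Icc vlo vhi, gg F f v = phi F f v * F v + v * (1 - F v) := by
    intro v hv
    have hfv := (hfpos v hv).ne'
    rw [phi, gg]
    field_simp
    ring
  have hphinn : ∀ v ∈ Icc vlo vhi, 0 ≤ phi F f v := by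
    intro v hv
    rcases eq_or_lt_of_le hv.1 with h | h
    · rw [← h]; exact hphi0
    · exact le_trans hphi0 (hreg hIlo hv h).le
  have hphipos : ∀ v ∈ Ioc vlo vhi, 0 < phi F f v := fun v hv =>
    lt_of_le_of_lt hphi0 (hreg hIlo ⟨hv.1.le, hv.2⟩ hv.1)
  have hGpos : ∀ v ∈ Icc vlo vhi, 0 < gg F f v := by
    intro v hv
    rw [hGalt v hv]
    rcases eq_or_lt_of_le hv.2 with h | h
    · have : phi F f vhi = vhi := by rw [phi, hFhi]; simp
      rw [h, this, hFhi]
      simpa using lt_trans hvlo0 hlt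
    · have h1 : 0 ≤ phi F f v * F v := mul_nonneg (hphinn v hv) (hF0 v hv)
      have h2 : 0 < v * (1 - F v) := by
        have := hFlt1 v ⟨hv.1, h⟩
        nlinarith [lt_of_lt_of_le hvlo0 hv.1]
      linarith
  -- price identity : p k = Hh (θ k)
  have hθmem : ∀ k ∈ Ioo (0:ℝ) 1, θ k ∈ Ioo vlo vhi := by
    intro k hk
    have h1 := hθloc k hk
    exact ⟨lt_of_le_of_lt (by rw [← hvMlo]; exact le_max_left _ _) h1.1, h1.2⟩
  have hpk : ∀ k ∈ Ioo (0:ℝ) 1, θ k * (1 - k / F (θ k)) = Hh F f (θ k) := by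
    intro k hk
    obtain ⟨hθI, hfoc⟩ := hθ k hk
    have hmem := hθmem k hk
    have hFθ : 0 < F (θ k) := hFposv (θ k) ⟨hmem.1, hθI.2⟩
    have hgθ : 0 < gg F f (θ k) := hGpos (θ k) hθI
    rw [hGval (θ k) hθI] at hfoc
    have halt := hGalt (θ k) hθI
    rw [Hh]
    field_simp
    linear_combination (-(θ k)) * hfoc + (θ k * F (θ k)) * halt
  have hKc : ContinuousOn (fun v => phi F f v * (F v) ^ 2 / gg F f v) (Icc vlo vhi) :=
    (hphic.mul (hFc.pow 2)).div hggc (fun v hv => (hGpos v hv).ne')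
  have hKθ : ∀ k ∈ Ioo (0:ℝ) 1, phi F f (θ k) * (F (θ k)) ^ 2 / gg F f (θ k) = k := by
    intro k hk
    obtain ⟨hθI, hfoc⟩ := hθ k hk
    rw [hGval (θ k) hθI] at hfoc
    rw [← hfoc, mul_div_assoc, div_self (hGpos (θ k) hθI).ne', mul_one]
  -- strict monotonicity of θ
  have hθsm : StrictMonoOn θ (Ioo (0:ℝ) 1) := by
    intro k₁ hk₁ k₂ hk₂ hklt
    obtain ⟨hθI₂, _⟩ := hθ k₂ hk₂
    have hsub : Icc vlo (θ k₂) ⊆ Icc vlo vhi := Icc_subset_Icc le_rfl hθI₂.2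
    have hK0 : phi F f vlo * (F vlo) ^ 2 / gg F f vlo = 0 := by rw [hFlo]; simp
    have hivt := intermediate_value_Icc hθI₂.1 (hKc.mono hsub)
    have hk₁mem : k₁ ∈ Icc (phi F f vlo * (F vlo) ^ 2 / gg F f vlo)
        (phi F f (θ k₂) * (F (θ k₂)) ^ 2 / gg F f (θ k₂)) := by
      rw [hK0, hKθ k₂ hk₂]
      exact ⟨hk₁.1.le, hklt.le⟩
    obtain ⟨v, hvmem, hveq⟩ := hivt hk₁mem
    have hveq' : phi F f v * (F v) ^ 2 / gg F f v = k₁ := hveq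
    have hvI : v ∈ Icc vlo vhi := hsub hvmem
    have hfoc : k₁ * Gfun F f vhi v = phi F f v * (F v) ^ 2 := by
      rw [hGval v hvI]
      rw [div_eq_iff (hGpos v hvI).ne'] at hveq'
      linarith [hveq']
    have := hθuniq k₁ hk₁ v hvI hfoc
    rw [← this]
    rcases eq_or_lt_of_le hvmem.2 with h | h
    · exfalso
      have hveq'' : phi F f v * (F v) ^ 2 / gg F f v = k₁ := hveq
      rw [h, hKθ k₂ hk₂] at hveq''
      exact absurd hveq'' hklt.ne'
    · exact h
  -- surjectivity of θ onto Ioo vlo vhi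
  have hθsurj : ∀ v ∈ Ioo vlo vhi, ∃ k ∈ Ioo (0:ℝ) 1, θ k = v := by
    intro v hv
    have hvI : v ∈ Icc vlo vhi := Ioo_subset_Icc_self hv
    set k := phi F f v * (F v) ^ 2 / gg F f v with hkdef
    have hphiv : 0 < phi F f v := hphipos v ⟨hv.1, hv.2.le⟩
    have hFv : 0 < F v := hFposv v ⟨hv.1, hv.2.le⟩
    have hFv1 : F v < 1 := hFlt1 v ⟨hv.1.le, hv.2⟩
    have hgv : 0 < gg F f v := hGpos v hvI
    have hk0 : 0 < k := by positivity
    have hk1 : k < 1 := by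
      rw [hkdef, div_lt_one hgv, hGalt v hvI]
      nlinarith [mul_pos (mul_pos hphiv hFv) (sub_pos.mpr hFv1),
        mul_pos (lt_trans hvlo0 hv.1) (sub_pos.mpr hFv1)]
    have hfoc : k * Gfun F f vhi v = phi F f v * (F v) ^ 2 := by
      rw [hGval v hvI, hkdef, div_mul_cancel₀ _ hgv.ne']
    exact ⟨k, ⟨hk0, hk1⟩, (hθuniq k ⟨hk0, hk1⟩ v hvI hfoc).symm⟩
  -- reduce to antitonicity of Hh
  have hmain : AntitoneOn (fun k => θ k * (1 - k / F (θ k))) (Set.Ioo (0:ℝ) 1) ↔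
      AntitoneOn (Hh F f) (Ioo vlo vhi) := by
    constructor
    · intro hp v₁ hv₁ v₂ hv₂ hle
      obtain ⟨k₁, hk₁, rfl⟩ := hθsurj v₁ hv₁
      obtain ⟨k₂, hk₂, rfl⟩ := hθsurj v₂ hv₂
      have hkle : k₁ ≤ k₂ := by
        by_contra h
        exact absurd (hθsm hk₂ hk₁ (lt_of_not_ge h)) (not_lt.mpr hle)
      calc Hh F f (θ k₂) = θ k₂ * (1 - k₂ / F (θ k₂)) := (hpk k₂ hk₂).symm
        _ ≤ θ k₁ * (1 - k₁ / F (θ k₁)) := hp hk₁ hk₂ hkle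
        _ = Hh F f (θ k₁) := hpk k₁ hk₁
    · intro hH k₁ hk₁ k₂ hk₂ hle
      have hθle : θ k₁ ≤ θ k₂ := by
        rcases eq_or_lt_of_le hle with h | h
        · rw [h]
        · exact (hθsm hk₁ hk₂ h).le
      calc θ k₂ * (1 - k₂ / F (θ k₂)) = Hh F f (θ k₂) := hpk k₂ hk₂
        _ ≤ Hh F f (θ k₁) := hH (hθmem k₁ hk₁) (hθmem k₂ hk₂) hθle
        _ = θ k₁ * (1 - k₁ / F (θ k₁)) := (hpk k₁ hk₁).symm
  have hHc : ContinuousOn (Hh F f) (Icc vlo vhi) := by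
    have : ContinuousOn (fun v => v ^ 2 * (1 - F v) / gg F f v) (Icc vlo vhi) :=
      (((continuousOn_id.pow 2).mul (continuousOn_const.sub hFc)).div hggc
        (fun v hv => (hGpos v hv).ne'))
    exact this
  rw [hmain]
  constructor
  · -- antitone ⇒ f vlo * vlo ≥ 2
    intro hH
    by_contra hc
    push_neg at hc
    -- find w slightly above vlo where Hh w > vlo
    set M : ℝ → ℝ := fun w => w ^ 2 * (1 - F w) - vlo * gg F f w with hM
    have hMlo : M vlo = 0 := by
      simp only [hM, gg, hFlo]
      ring
    have hFd : HasDerivWithinAt F (f vlo) (Icc vlo vhi) vlo :=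
      (hFderiv vlo hIlo).hasDerivWithinAt
    obtain ⟨d, hfd⟩ : ∃ d, HasDerivWithinAt f d (Icc vlo vhi) vlo :=
      ⟨_, (hfdiff vlo hIlo).hasDerivWithinAt⟩
    have h1 : HasDerivWithinAt (fun v => F v * (1 - F v))
        (f vlo * (1 - F vlo) + F vlo * (-f vlo)) (Icc vlo vhi) vlo :=
      hFd.mul (hFd.const_sub 1)
    have h2 := h1.div hfd hflo.ne'
    have hgd : HasDerivWithinAt (gg F f)
        (1 - ((f vlo * (1 - F vlo) + F vlo * (-f vlo)) * f vlo -
          F vlo * (1 - F vlo) * d) / f vlo ^ 2) (Icc vlo vhi) vlo :=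
      ((hasDerivAt_id vlo).hasDerivWithinAt).sub h2
    have hud : HasDerivWithinAt (fun v => v ^ 2 * (1 - F v))
        ((↑2 * vlo ^ 1) * (1 - F vlo) + vlo ^ 2 * (-f vlo)) (Icc vlo vhi) vlo :=
      ((hasDerivAt_pow 2 vlo).hasDerivWithinAt).mul
        (hFd.const_sub 1)
    have hMd : HasDerivWithinAt M
        (((↑2 * vlo ^ 1) * (1 - F vlo) + vlo ^ 2 * (-f vlo)) -
          vlo * (1 - ((f vlo * (1 - F vlo) + F vlo * (-f vlo)) * f vlo -
            F vlo * (1 - F vlo) * d) / f vlo ^ 2)) (Icc vlo vhi) vlo :=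
      hud.sub (hgd.const_mul vlo)
    have hMd' : HasDerivWithinAt M (vlo * (2 - f vlo * vlo)) (Icc vlo vhi) vlo := by
      convert hMd using 1
      rw [hFlo]
      have hne := hflo.ne'
      field_simp
      ring
    have hmpos : 0 < vlo * (2 - f vlo * vlo) :=
      mul_pos hvlo0 (by linarith)
    rw [hasDerivWithinAt_iff_tendsto_slope] at hMd'
    have hsub2 : Ioo vlo vhi ⊆ Icc vlo vhi \ {vlo} :=
      fun y hy => ⟨Ioo_subset_Icc_self hy, hy.1.ne'⟩
    have htd := hMd'.mono_left (nhdsWithin_mono vlo hsub2)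
    haveI : (𝓝[Ioo vlo vhi] vlo).NeBot := by
      apply mem_closure_iff_nhdsWithin_neBot.mp
      rw [closure_Ioo hlt.ne]
      exact hIlo
    have hev : ∀ᶠ w in 𝓝[Ioo vlo vhi] vlo, 0 < slope M vlo w :=
      htd.eventually (eventually_gt_nhds hmpos)
    obtain ⟨w, hws, hwm⟩ := (hev.and eventually_mem_nhdsWithin).exists
    have hwd : 0 < w - vlo := sub_pos.mpr hwm.1
    have hMw : 0 < M w := by
      rw [slope_def_field, hMlo, sub_zero] at hws
      have := mul_pos hws hwd
      rwa [div_mul_cancel₀ _ hwd.ne'] at this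
    have hwI : w ∈ Icc vlo vhi := Ioo_subset_Icc_self hwm
    have hHw : vlo < Hh F f w := by
      rw [Hh, lt_div_iff₀ (hGpos w hwI)]
      simp only [hM] at hMw
      linarith
    -- but antitonicity forces Hh w ≤ vlo
    have hHlo : Hh F f vlo = vlo := by
      rw [Hh, gg, hFlo]
      field_simp
      ring
    have hTend : Filter.Tendsto (Hh F f) (𝓝[Ioo vlo vhi] vlo) (𝓝 vlo) := by
      have h := (hHc vlo hIlo).tendsto
      rw [hHlo] at h
      exact h.mono_left (nhdsWithin_mono vlo Ioo_subset_Icc_self)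
    have hev2 : ∀ᶠ v in 𝓝[Ioo vlo vhi] vlo, Hh F f w ≤ Hh F f v := by
      filter_upwards [eventually_mem_nhdsWithin,
        ((eventually_lt_nhds hwm.1).filter_mono nhdsWithin_le_nhds)] with v hv hvw
      exact hH hv hwm hvw.le
    have := ge_of_tendsto hTend hev2
    linarith
  · -- f vlo * vlo ≥ 2 ⇒ antitone
    intro hc
    have hkey : ∀ x ∈ Ioo vlo vhi, ∃ D, D ≤ 0 ∧ HasDerivAt (Hh F f) D x := by
      intro x hx
      have hxI : x ∈ Icc vlo vhi := Ioo_subset_Icc_self hx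
      have hxpos : 0 < x := lt_trans hvlo0 hx.1
      have hfx : 0 < f x := hfpos x hxI
      have hFx0 : 0 ≤ F x := hF0 x hxI
      have hFx1 : F x < 1 := hFlt1 x ⟨hx.1.le, hx.2⟩
      have hnhds : Icc vlo vhi ∈ nhds x := Icc_mem_nhds hx.1 hx.2
      obtain ⟨d, hfd⟩ : ∃ d, HasDerivAt f d x :=
        ⟨_, (hfdiff.differentiableAt hnhds).hasDerivAt⟩
      have hFd : HasDerivAt F (f x) x := hFderiv x hxI
      have h1 : HasDerivAt (fun v => F v * (1 - F v))
          (f x * (1 - F x) + F x * (-f x)) x :=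
        hFd.mul (hFd.const_sub 1)
      have h2 := h1.div hfd hfx.ne'
      have hg : HasDerivAt (gg F f)
          (1 - ((f x * (1 - F x) + F x * (-f x)) * f x - F x * (1 - F x) * d) / f x ^ 2) x :=
        (hasDerivAt_id x).sub h2
      have hu : HasDerivAt (fun v => v ^ 2 * (1 - F v))
          ((↑2 * x ^ 1) * (1 - F x) + x ^ 2 * (-f x)) x :=
        (hasDerivAt_pow 2 x).mul (hFd.const_sub 1)
      have hH' : HasDerivAt (Hh F f)
          ((((↑2 * x ^ 1) * (1 - F x) + x ^ 2 * (-f x)) * gg F f x -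
            x ^ 2 * (1 - F x) *
              (1 - ((f x * (1 - F x) + F x * (-f x)) * f x - F x * (1 - F x) * d) / f x ^ 2)) /
            gg F f x ^ 2) x := hu.div hg (hGpos x hxI).ne'
      refine ⟨_, ?_, hH'⟩
      -- the antitonicity of (1-F)/f gives a lower bound on d
      have hrd : HasDerivAt (fun v => (1 - F v) / f v)
          ((-f x * f x - (1 - F x) * d) / f x ^ 2) x := by
        exact (hFd.const_sub 1).div hfd hfx.ne'
      have hrant : ∀ a ∈ Ico vlo vhi, ∀ b ∈ Ico vlo vhi, a ≤ b →
          (1 - F b) / f b ≤ (1 - F a) / f a := by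
        intro a ha b hb hab
        have hfa := hfpos a ⟨ha.1, ha.2.le⟩
        have hfb := hfpos b ⟨hb.1, hb.2.le⟩
        have hFa := hFlt1 a ha
        have hFb := hFlt1 b hb
        have hz := hhazard ha hb hab
        simp only at hz
        rw [div_le_div_iff₀ (by linarith) (by linarith)] at hz
        rw [div_le_div_iff₀ hfb hfa]
        nlinarith
      have hr'le : (-f x * f x - (1 - F x) * d) / f x ^ 2 ≤ 0 := by
        rw [hasDerivAt_iff_tendsto_slope] at hrd
        haveI : (𝓝[Ioo x vhi] x).NeBot := by
          apply mem_closure_iff_nhdsWithin_neBot.mp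
          rw [closure_Ioo hx.2.ne]
          exact ⟨le_rfl, hx.2.le⟩
        have hsub3 : Ioo x vhi ⊆ {x}ᶜ := fun y hy => hy.1.ne'
        have htd := hrd.mono_left (nhdsWithin_mono x hsub3)
        apply le_of_tendsto htd
        filter_upwards [eventually_mem_nhdsWithin] with w hw
        rw [slope_def_field]
        apply div_nonpos_of_nonpos_of_nonneg
        · have hxm : x ∈ Ico vlo vhi := ⟨hx.1.le, hx.2⟩
          have hwm : w ∈ Ico vlo vhi := ⟨le_trans hx.1.le hw.1.le, hw.2⟩
          have := hrant x hxm w hwm hw.1.le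
          linarith
        · linarith [hw.1]
      have h3 : -(f x * f x) ≤ (1 - F x) * d := by
        by_contra h
        push_neg at h
        have : 0 < (-f x * f x - (1 - F x) * d) / f x ^ 2 :=
          div_pos (by linarith) (pow_pos hfx 2)
        linarith
      -- hazard bound: 2 (1 - F x) ≤ x f x
      have hfl : f vlo * (1 - F x) ≤ f x := by
        have hz := hhazard ⟨le_rfl, hlt⟩ ⟨hx.1.le, hx.2⟩ hx.1.le
        simp only [hFlo] at hz
        rw [div_le_div_iff₀ (by norm_num) (by linarith [hFx1])] at hz
        nlinarith
      have hxf : 2 * (1 - F x) ≤ x * f x := by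
        have e1 : x * (f vlo * (1 - F x)) ≤ x * f x :=
          mul_le_mul_of_nonneg_left hfl hxpos.le
        have e2 : vlo * (f vlo * (1 - F x)) ≤ x * (f vlo * (1 - F x)) :=
          mul_le_mul_of_nonneg_right hx.1.le
            (mul_nonneg hflo.le (by linarith))
        have e3 : 2 * (1 - F x) ≤ vlo * (f vlo * (1 - F x)) := by
          nlinarith
        linarith
      -- now the sign of the derivative
      have hgpos := hGpos x hxI
      have hg'0 : 0 ≤ 1 - ((f x * (1 - F x) + F x * (-f x)) * f x -
          F x * (1 - F x) * d) / f x ^ 2 := by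
        rw [sub_nonneg, div_le_one (pow_pos hfx 2)]
        nlinarith [mul_nonneg hFx0 (by nlinarith : (0:ℝ) ≤ 2 * (f x * f x) + (1 - F x) * d)]
      have hu'le : (↑2 * x ^ 1) * (1 - F x) + x ^ 2 * (-f x) ≤ 0 := by
        have : x * (2 * (1 - F x) - x * f x) ≤ 0 :=
          mul_nonpos_of_nonneg_of_nonpos hxpos.le (by linarith)
        nlinarith [this]
      apply div_nonpos_of_nonpos_of_nonneg
      · have ha := mul_nonpos_of_nonpos_of_nonneg hu'le hgpos.le
        have hb : 0 ≤ x ^ 2 * (1 - F x) *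
            (1 - ((f x * (1 - F x) + F x * (-f x)) * f x - F x * (1 - F x) * d) / f x ^ 2) :=
          mul_nonneg (mul_nonneg (sq_nonneg x) (by linarith)) hg'0
        linarith
      · exact sq_nonneg _
    have hA : AntitoneOn (Hh F f) (Icc vlo vhi) := by
      apply antitoneOn_of_deriv_nonpos (convex_Icc vlo vhi) hHc
      · intro x hx
        rw [interior_Icc] at hx
        obtain ⟨D, _, hD⟩ := hkey x hx
        exact hD.differentiableAt.differentiableWithinAt
      · intro x hx
        rw [interior_Icc] at hx
        obtain ⟨D, hD0, hD⟩ := hkey x hx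
        rw [hD.deriv]
        exact hD0
    exact hA.mono Ioo_subset_Icc_self
end

section
/- For every capacity k ∈ (0,1) and every type v ∈ V, the mixed-market consumer surplus dominates the public-option-only surplus: U(v,k) ≥ k·v; moreover the inequality is strict whenever v > 0. -/
open Set MeasureTheory

/-- for every `k ∈ (0,1)` and every `v ∈ V`, the mixed-market consumer
surplus dominates the public-option-only surplus: `U(v,k) ≥ k·v`, strictly if `v > 0`. -/
theorem stmt_18
    (vlo vhi : ℝ) (hvlo : 0 ≤ vlo) (hlt : vlo < vhi)
    (F f : ℝ → ℝ) (hFmono : Monotone F)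
    (hFlo : F vlo = 0) (hFhi : F vhi = 1)
    (hFderiv : ∀ v ∈ Set.Icc vlo vhi, HasDerivAt F (f v) v)
    (hfpos : ∀ v ∈ Set.Icc vlo vhi, 0 < f v)
    (hfdiff : DifferentiableOn ℝ f (Set.Icc vlo vhi))
    (hreg : StrictMonoOn (phi F f) (Set.Icc vlo vhi))
    (vM : ℝ) (hvM : IsLeast {v ∈ Set.Icc vlo vhi | 0 ≤ phi F f v} vM)
    (FInv : ℝ → ℝ)
    (hFInv : ∀ k ∈ Set.Ioo (0:ℝ) 1, FInv k ∈ Set.Icc vlo vhi ∧ F (FInv k) = k)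
    (θ : ℝ → ℝ)
    (hθ : ∀ k ∈ Set.Ioo (0:ℝ) 1, θ k ∈ Set.Icc vlo vhi ∧
      k * Gfun F f vhi (θ k) = phi F f (θ k) * (F (θ k)) ^ 2)
    (hθuniq : ∀ k ∈ Set.Ioo (0:ℝ) 1, ∀ v ∈ Set.Icc vlo vhi,
      k * Gfun F f vhi v = phi F f v * (F v) ^ 2 → v = θ k)
    (hθloc : ∀ k ∈ Set.Ioo (0:ℝ) 1, θ k ∈ Set.Ioo (max vM (FInv k)) vhi)
    :
    ∀ k ∈ Set.Ioo (0:ℝ) 1, ∀ v ∈ Set.Icc vlo vhi,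
      k * v ≤ Ucs F θ v k ∧ (0 < v → k * v < Ucs F θ v k) := by
  intro k hk v hv
  obtain ⟨hk0, hk1⟩ := hk
  have hFsm : StrictMonoOn F (Set.Icc vlo vhi) := by
    apply strictMonoOn_of_deriv_pos (convex_Icc _ _)
    · exact fun x hx => (hFderiv x hx).continuousAt.continuousWithinAt
    · intro x hx
      rw [interior_Icc] at hx
      rw [(hFderiv x (Set.mem_Icc_of_Ioo hx)).deriv]
      exact hfpos x (Set.mem_Icc_of_Ioo hx)
  obtain ⟨hFIk, hFIval⟩ := hFInv k ⟨hk0, hk1⟩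
  obtain ⟨hθmem, -⟩ := hθ k ⟨hk0, hk1⟩
  obtain ⟨hθlo, hθhi⟩ := hθloc k ⟨hk0, hk1⟩
  have hθgt : FInv k < θ k := lt_of_le_of_lt (le_max_right _ _) hθlo
  have hFθk : k < F (θ k) := calc k = F (FInv k) := hFIval.symm
    _ < F (θ k) := hFsm hFIk hθmem hθgt
  have hFθ1 : F (θ k) < 1 := by rw [← hFhi]; exact hFsm hθmem (Set.right_mem_Icc.mpr hlt.le) hθhi
  have hFθpos : 0 < F (θ k) := lt_trans hk0 hFθk
  have hπk : k < k / F (θ k) := by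
    rw [lt_div_iff₀ hFθpos]; nlinarith
  have hθpos : 0 < θ k :=
    lt_of_le_of_lt (le_trans hvlo (hvM.1.1.1.trans (le_max_left _ _))) hθlo
  have hv0 : 0 ≤ v := le_trans hvlo hv.1
  unfold Ucs
  split_ifs with h
  · exact ⟨mul_le_mul_of_nonneg_right hπk.le hv0,
      fun hv' => mul_lt_mul_of_pos_right hπk hv'⟩
  · push_neg at h
    have key : k * v < v - θ k * (1 - k / F (θ k)) := by
      nlinarith [mul_pos hθpos (sub_pos.mpr hπk),
        mul_nonneg (sub_nonneg.mpr hk1.le) (sub_nonneg.mpr h)]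
    exact ⟨key.le, fun _ => key⟩
end

section
/- Fix Q ∈ (0,1) and set v^Q := F⁻¹(Q) and x^Q(v) := 1 if v ≥ v^Q and 0 otherwise. Then among all nondecreasing measurable functions x : V → [0,1] satisfying ∫_V (1 − x(v))·f(v) dv = Q, the step function x^Q maximizes ∫_V x(v)·φ(v)·f(v) dv, and any other maximizer in this class agrees with x^Q almost everywhere. -/
open Set MeasureTheory

/-- fix `Q ∈ (0,1)`, let `v^Q = F⁻¹(Q)` and `x^Q = 1_{[v^Q, v̄]}`. Among
all nondecreasing measurable allocation rules `x : V → [0,1]` with induced demand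
`∫_V (1 − x(v))·f(v) dv = Q`, the step rule `x^Q` maximizes `∫_V x(v)·φ(v)·f(v) dv`,
and any other maximizer agrees with `x^Q` almost everywhere. -/
theorem stmt_19
    (vlo vhi : ℝ) (hvlo : 0 ≤ vlo) (hlt : vlo < vhi)
    (F f : ℝ → ℝ) (hFmono : Monotone F)
    (hFlo : F vlo = 0) (hFhi : F vhi = 1)
    (hFderiv : ∀ v ∈ Set.Icc vlo vhi, HasDerivAt F (f v) v)
    (hfpos : ∀ v ∈ Set.Icc vlo vhi, 0 < f v)
    (hfdiff : DifferentiableOn ℝ f (Set.Icc vlo vhi))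
    (hreg : StrictMonoOn (phi F f) (Set.Icc vlo vhi))
    (Q : ℝ) (hQ : Q ∈ Set.Ioo (0:ℝ) 1)
    (vQ : ℝ) (hvQ : vQ ∈ Set.Icc vlo vhi) (hFvQ : F vQ = Q) :
    (∀ x : ℝ → ℝ, Measurable x → (∀ v ∈ Set.Icc vlo vhi, x v ∈ Set.Icc (0:ℝ) 1) →
        MonotoneOn x (Set.Icc vlo vhi) →
        (∫ v in vlo..vhi, (1 - x v) * f v) = Q →
        (∫ v in vlo..vhi, x v * phi F f v * f v) ≤
          ∫ v in vlo..vhi, (if vQ ≤ v then (1:ℝ) else 0) * phi F f v * f v) ∧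
      (∀ x : ℝ → ℝ, Measurable x → (∀ v ∈ Set.Icc vlo vhi, x v ∈ Set.Icc (0:ℝ) 1) →
        MonotoneOn x (Set.Icc vlo vhi) →
        (∫ v in vlo..vhi, (1 - x v) * f v) = Q →
        (∫ v in vlo..vhi, x v * phi F f v * f v) =
          (∫ v in vlo..vhi, (if vQ ≤ v then (1:ℝ) else 0) * phi F f v * f v) →
        ∀ᵐ v ∂(MeasureTheory.volume.restrict (Set.Icc vlo vhi)),
          x v = if vQ ≤ v then (1:ℝ) else 0) := by
  obtain ⟨hQ0, hQ1⟩ := hQ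
  have hle : vlo ≤ vhi := hlt.le
  have hCf : ContinuousOn f (Set.Icc vlo vhi) := hfdiff.continuousOn
  have hCF : ContinuousOn F (Set.Icc vlo vhi) :=
    fun v hv => (hFderiv v hv).continuousAt.continuousWithinAt
  have hfne : ∀ v ∈ Set.Icc vlo vhi, f v ≠ 0 := fun v hv => (hfpos v hv).ne'
  have hCphi : ContinuousOn (phi F f) (Set.Icc vlo vhi) := by
    apply ContinuousOn.sub continuousOn_id
    exact (continuousOn_const.sub hCF).div hCf hfne
  have hCphif : ContinuousOn (fun v => phi F f v * f v) (Set.Icc vlo vhi) := hCphi.mul hCf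
  have hIoc : Set.Ioc vlo vhi ⊆ Set.Icc vlo vhi := Set.Ioc_subset_Icc_self
  -- measurability of the step function
  have hxQmeas : Measurable (fun v : ℝ => if vQ ≤ v then (1:ℝ) else 0) := by
    exact Measurable.ite measurableSet_Ici measurable_const measurable_const
  have hxQ01 : ∀ v ∈ Set.Icc vlo vhi, |if vQ ≤ v then (1:ℝ) else 0| ≤ 1 := by
    intro v _; split <;> simp
  -- generic integrability lemma
  have hint : ∀ (g : ℝ → ℝ), ContinuousOn g (Set.Icc vlo vhi) → ∀ (x : ℝ → ℝ), Measurable x →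
      (∀ v ∈ Set.Icc vlo vhi, |x v| ≤ 1) →
      IntervalIntegrable (fun v => x v * g v) volume vlo vhi := by
    intro g hg x hx hxb
    obtain ⟨C, hC⟩ := isCompact_Icc.exists_bound_of_continuousOn hg
    rw [intervalIntegrable_iff_integrableOn_Ioc_of_le hle]
    refine ⟨(hx.aestronglyMeasurable.mul
      ((hg.mono hIoc).aestronglyMeasurable measurableSet_Ioc)), ?_⟩
    refine HasFiniteIntegral.restrict_of_bounded (C := C) measure_Ioc_lt_top ?_
    refine (ae_restrict_iff' measurableSet_Ioc).2 (Filter.Eventually.of_forall fun v hv => ?_)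
    have hvI := hIoc hv
    have hb := hxb v hvI
    have hgC := hC v hvI
    rw [Real.norm_eq_abs] at hgC ⊢
    rw [abs_mul]
    calc |x v| * |g v| ≤ 1 * C := mul_le_mul hb hgC (abs_nonneg _) zero_le_one
      _ = C := one_mul C
  -- integrability of constant-one allocation against g
  have hint1 : ∀ (g : ℝ → ℝ), ContinuousOn g (Set.Icc vlo vhi) →
      IntervalIntegrable g volume vlo vhi := by
    intro g hg
    exact (hg.mono (by rw [Set.uIcc_of_le hle])).intervalIntegrable
  -- FTC
  have hFTC : ∀ a b, a ∈ Set.Icc vlo vhi → b ∈ Set.Icc vlo vhi →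
      (∫ v in a..b, f v) = F b - F a := by
    intro a b ha hb
    refine intervalIntegral.integral_eq_sub_of_hasDerivAt
      (fun v hv => hFderiv v (Set.uIcc_subset_Icc ha hb hv)) ?_
    exact (hCf.mono (Set.uIcc_subset_Icc ha hb)).intervalIntegrable
  have hmemlo : vlo ∈ Set.Icc vlo vhi := ⟨le_refl _, hle⟩
  have hmemhi : vhi ∈ Set.Icc vlo vhi := ⟨hle, le_refl _⟩
  have hIf : (∫ v in vlo..vhi, f v) = 1 := by
    rw [hFTC vlo vhi hmemlo hmemhi, hFhi, hFlo]; ring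
  -- a.e. not equal to vQ
  have hne_ae : ∀ᵐ v : ℝ, v ≠ vQ := by
    have h0 : volume ({vQ} : Set ℝ) = 0 := Real.volume_singleton
    exact compl_mem_ae_iff.2 h0
  -- integral of step fn against f
  have hxQf : (∫ v in vlo..vhi, (if vQ ≤ v then (1:ℝ) else 0) * f v) = 1 - Q := by
    have i1 : IntervalIntegrable (fun v => (if vQ ≤ v then (1:ℝ) else 0) * f v) volume vlo vQ :=
      (hint f hCf _ hxQmeas hxQ01).mono_set (by rw [Set.uIcc_of_le hvQ.1, Set.uIcc_of_le hle]; exact Set.Icc_subset_Icc le_rfl hvQ.2)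
    have i2 : IntervalIntegrable (fun v => (if vQ ≤ v then (1:ℝ) else 0) * f v) volume vQ vhi :=
      (hint f hCf _ hxQmeas hxQ01).mono_set (by rw [Set.uIcc_of_le hvQ.2, Set.uIcc_of_le hle]; exact Set.Icc_subset_Icc hvQ.1 le_rfl)
    rw [← intervalIntegral.integral_add_adjacent_intervals i1 i2]
    have e1 : (∫ v in vlo..vQ, (if vQ ≤ v then (1:ℝ) else 0) * f v) = 0 := by
      rw [intervalIntegral.integral_of_le hvQ.1]
      have : (∫ v in Set.Ioc vlo vQ, (if vQ ≤ v then (1:ℝ) else 0) * f v)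
          = ∫ _v in Set.Ioc vlo vQ, (0:ℝ) := by
        apply setIntegral_congr_ae measurableSet_Ioc
        filter_upwards [hne_ae] with v hv hmem
        rw [if_neg (by intro h; exact hv (le_antisymm hmem.2 h))]
        ring
      rw [this]; simp
    have e2 : (∫ v in vQ..vhi, (if vQ ≤ v then (1:ℝ) else 0) * f v) = 1 - Q := by
      have : (∫ v in vQ..vhi, (if vQ ≤ v then (1:ℝ) else 0) * f v) = ∫ v in vQ..vhi, f v := by
        apply intervalIntegral.integral_congr
        intro v hv
        rw [Set.uIcc_of_le hvQ.2] at hv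
        simp [if_pos hv.1]
      rw [this, hFTC vQ vhi hvQ hmemhi, hFhi, hFvQ]
    rw [e1, e2]; ring
  -- the core argument
  have core : ∀ x : ℝ → ℝ, Measurable x → (∀ v ∈ Set.Icc vlo vhi, x v ∈ Set.Icc (0:ℝ) 1) →
      (∫ v in vlo..vhi, (1 - x v) * f v) = Q →
      ((∫ v in vlo..vhi, x v * phi F f v * f v) ≤
        (∫ v in vlo..vhi, (if vQ ≤ v then (1:ℝ) else 0) * phi F f v * f v)) ∧
      ((∫ v in vlo..vhi, x v * phi F f v * f v) =
        (∫ v in vlo..vhi, (if vQ ≤ v then (1:ℝ) else 0) * phi F f v * f v) →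
        ∀ᵐ v ∂(volume.restrict (Set.Icc vlo vhi)), x v = if vQ ≤ v then (1:ℝ) else 0) := by
    intro x hx hx01 hcons
    have habs : ∀ v ∈ Set.Icc vlo vhi, |x v| ≤ 1 := by
      intro v hv; rw [abs_le]; constructor <;> linarith [(hx01 v hv).1, (hx01 v hv).2]
    set c := phi F f vQ with hc
    set g : ℝ → ℝ := fun v => ((if vQ ≤ v then (1:ℝ) else 0) - x v) * ((phi F f v - c) * f v)
      with hgdef
    have hxf : (∫ v in vlo..vhi, x v * f v) = 1 - Q := by
      have hsub : (∫ v in vlo..vhi, (1 - x v) * f v)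
          = (∫ v in vlo..vhi, f v) - ∫ v in vlo..vhi, x v * f v := by
        rw [← intervalIntegral.integral_sub (hint1 f hCf) (hint f hCf x hx habs)]
        apply intervalIntegral.integral_congr
        intro v _; ring
      rw [hcons, hIf] at hsub
      linarith
    -- integrabilities
    have hCphic : ContinuousOn (fun v => (phi F f v - c) * f v) (Set.Icc vlo vhi) :=
      (hCphi.sub continuousOn_const).mul hCf
    have intg : IntervalIntegrable g volume vlo vhi := by
      refine hint _ hCphic (fun v => (if vQ ≤ v then (1:ℝ) else 0) - x v)
        (hxQmeas.sub hx) ?_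
      intro v hv
      have h2 := hx01 v hv
      rw [abs_le]
      by_cases h : vQ ≤ v <;> simp only [h, if_true, if_false] <;>
        constructor <;> linarith [h2.1, h2.2]
    have intA : IntervalIntegrable (fun v => (if vQ ≤ v then (1:ℝ) else 0) * (phi F f v * f v))
        volume vlo vhi := hint _ hCphif _ hxQmeas hxQ01
    have intB : IntervalIntegrable (fun v => x v * (phi F f v * f v)) volume vlo vhi :=
      hint _ hCphif x hx habs
    have intC : IntervalIntegrable (fun v => (if vQ ≤ v then (1:ℝ) else 0) * f v)
        volume vlo vhi := hint f hCf _ hxQmeas hxQ01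
    have intD : IntervalIntegrable (fun v => x v * f v) volume vlo vhi := hint f hCf x hx habs
    have hgsplit : (∫ v in vlo..vhi, g v)
        = ((∫ v in vlo..vhi, (if vQ ≤ v then (1:ℝ) else 0) * (phi F f v * f v))
            - ∫ v in vlo..vhi, x v * (phi F f v * f v))
          - c * ((∫ v in vlo..vhi, (if vQ ≤ v then (1:ℝ) else 0) * f v)
            - ∫ v in vlo..vhi, x v * f v) := by
      rw [← intervalIntegral.integral_sub intA intB, ← intervalIntegral.integral_sub intC intD,
          ← intervalIntegral.integral_const_mul,
          ← intervalIntegral.integral_sub (intA.sub intB) ((intC.sub intD).const_mul c)]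
      apply intervalIntegral.integral_congr
      intro v _
      simp only [hgdef]
      ring
    have hkey : (∫ v in vlo..vhi, g v)
        = (∫ v in vlo..vhi, (if vQ ≤ v then (1:ℝ) else 0) * (phi F f v * f v))
          - ∫ v in vlo..vhi, x v * (phi F f v * f v) := by
      rw [hgsplit, hxQf, hxf]; ring
    have assocx : (∫ v in vlo..vhi, x v * phi F f v * f v)
        = ∫ v in vlo..vhi, x v * (phi F f v * f v) := by
      apply intervalIntegral.integral_congr; intro v _; ring
    have assocQ : (∫ v in vlo..vhi, (if vQ ≤ v then (1:ℝ) else 0) * phi F f v * f v)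
        = ∫ v in vlo..vhi, (if vQ ≤ v then (1:ℝ) else 0) * (phi F f v * f v) := by
      apply intervalIntegral.integral_congr; intro v _; ring
    have hg_nonneg : ∀ v ∈ Set.Ioc vlo vhi, 0 ≤ g v := by
      intro v hv
      have hvI := hIoc hv
      have h2 := hx01 v hvI
      have hf := (hfpos v hvI).le
      by_cases h : vQ ≤ v
      · have hphi : c ≤ phi F f v := hreg.monotoneOn hvQ hvI h
        simp only [hgdef, if_pos h]
        exact mul_nonneg (by linarith [h2.2]) (mul_nonneg (by linarith) hf)
      · push_neg at h
        have hphi : phi F f v ≤ c := hreg.monotoneOn hvI hvQ h.le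
        simp only [hgdef, if_neg (not_le.2 h)]
        nlinarith [mul_nonneg h2.1 (mul_nonneg (sub_nonneg.2 hphi) hf)]
    have hpos : 0 ≤ ∫ v in vlo..vhi, g v := by
      rw [intervalIntegral.integral_of_le hle]
      exact setIntegral_nonneg measurableSet_Ioc hg_nonneg
    constructor
    · linarith [hpos, hkey, assocx, assocQ]
    · intro heq
      have hzero : (∫ v in vlo..vhi, g v) = 0 := by
        rw [hkey]; linarith [assocx, assocQ, heq]
      have hint' : IntegrableOn g (Set.Ioc vlo vhi) :=
        (intervalIntegrable_iff_integrableOn_Ioc_of_le hle).1 intg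
      have hg0 : g =ᵐ[volume.restrict (Set.Ioc vlo vhi)] 0 := by
        refine (setIntegral_eq_zero_iff_of_nonneg_ae ?_ hint').1 ?_
        · exact (ae_restrict_iff' measurableSet_Ioc).2
            (Filter.Eventually.of_forall fun v hv => hg_nonneg v hv)
        · rw [← intervalIntegral.integral_of_le hle]; exact hzero
      rw [← Measure.restrict_congr_set Ioc_ae_eq_Icc]
      filter_upwards [hg0, ae_restrict_mem measurableSet_Ioc, ae_restrict_of_ae hne_ae]
        with v h0 hmem hvne
      have hvI := hIoc hmem
      have hfne' := hfne v hvI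
      have hphine : phi F f v - c ≠ 0 := by
        intro hcontr
        exact hvne (hreg.injOn hvI hvQ (by linarith [sub_eq_zero.1 hcontr]))
      have h0' : ((if vQ ≤ v then (1:ℝ) else 0) - x v) * ((phi F f v - c) * f v) = 0 := h0
      rcases mul_eq_zero.1 h0' with h1 | h1
      · linarith [h1]
      · exact absurd h1 (mul_ne_zero hphine hfne')
  exact ⟨fun x hx hx01 _ hcons => (core x hx hx01 hcons).1,
         fun x hx hx01 _ hcons heq => (core x hx hx01 hcons).2 heq⟩
end
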